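/- arXiv:1008.3691 — 8 statements merged into one kernel-verified Lean document; each statement's English description precedes it below -/
import Mathlib

section
/- For all positive integers r, w, t with w ≤ r and t ≥ r + w, the minimum number of points of an (r,w;1)-cover-free family with t blocks equals the biclique covering number of the bi-intersection graph: N((r,w),t) = bc(I_t(r,w)). -/
/-- `B : Fin t → Finset (Fin n)` is an (r,w;d)-cover-free family: for any disjoint
index sets `L, M` with `|L| = r`, `|M| = w`, the intersection of the blocks in `L`
has at least `d` elements outside the union of the blocks in `M`. -/
def IsCFF (r w d n t : ℕ) (B : Fin t → Finset (Fin n)) : Prop :=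
  ∀ L M : Finset (Fin t), Disjoint L M → L.card = r → M.card = w →
    d ≤ ((L.inf B) \ (M.sup B)).card

/-- `Ncff r w d t` = `N((r,w;d),t)`, the minimum number of points of an
(r,w;d)-CFF with `t` blocks, with the convention that it equals 1 if `r = 0` or `w = 0`. -/
noncomputable def Ncff (r w d t : ℕ) : ℕ :=
  if r = 0 ∨ w = 0 then 1
  else sInf {n : ℕ | ∃ B : Fin t → Finset (Fin n), IsCFF r w d n t B}
/-- `F` is a `d`-biclique cover of `G` by `n` bicliques: each `F i` is a pair of
disjoint vertex sets with all cross pairs adjacent in `G`, and every edge of `G`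
lies in at least `d` of the bicliques. -/
def IsBicliqueCoverD {V : Type*} (G : SimpleGraph V) (d n : ℕ)
    (F : Fin n → Finset V × Finset V) : Prop :=
  (∀ i, Disjoint (F i).1 (F i).2 ∧ ∀ x ∈ (F i).1, ∀ y ∈ (F i).2, G.Adj x y) ∧
  (∀ x y, G.Adj x y →
    d ≤ Nat.card {i : Fin n // (x ∈ (F i).1 ∧ y ∈ (F i).2) ∨ (y ∈ (F i).1 ∧ x ∈ (F i).2)})

/-- `bcD G d` = the `d`-biclique covering number of `G`. -/
noncomputable def bcD {V : Type*} (G : SimpleGraph V) (d : ℕ) : ℕ :=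
  sInf {n : ℕ | ∃ F : Fin n → Finset V × Finset V, IsBicliqueCoverD G d n F}
/-- The bi-intersection graph `I_t(r,w)`: a bipartite graph whose left vertices are
the `r`-subsets of `[t]` and right vertices are the `w`-subsets of `[t]`, with an
`r`-subset adjacent to a `w`-subset iff they are disjoint. -/
def biIntGraph (t r w : ℕ) : SimpleGraph (Finset (Fin t) ⊕ Finset (Fin t)) :=
  SimpleGraph.fromRel (fun a b =>
    ∃ A B : Finset (Fin t), a = Sum.inl A ∧ b = Sum.inr B ∧
      A.card = r ∧ B.card = w ∧ Disjoint A B)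

/-- For positive integers `r, w, t` with `w ≤ r` and `t ≥ r + w`,
`N((r,w),t) = bc(I_t(r,w))`. -/

theorem cff_eq_biclique_cover (r w t : ℕ) (hw : 0 < w) (hwr : w ≤ r) (ht : r + w ≤ t) :
    Ncff r w 1 t = bcD (biIntGraph t r w) 1 := by
  classical
  have hr : 0 < r := lt_of_lt_of_le hw hwr
  rw [Ncff, if_neg (by push_neg; exact ⟨hr.ne', hw.ne'⟩), bcD]
  congr 1
  ext n
  simp only [Set.mem_setOf_eq]
  constructor
  · rintro ⟨B, hB⟩
    refine ⟨fun i =>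
      (Finset.univ.filter fun v => ∃ A, v = Sum.inl A ∧ A.card = r ∧ ∀ l ∈ A, i ∈ B l,
       Finset.univ.filter fun v => ∃ M, v = Sum.inr M ∧ M.card = w ∧ ∀ m ∈ M, i ∉ B m),
      ?_, ?_⟩
    · intro i
      constructor
      · rw [Finset.disjoint_left]
        rintro v hv1 hv2
        rw [Finset.mem_filter] at hv1 hv2
        obtain ⟨-, A, rfl, -⟩ := hv1
        obtain ⟨-, M, hM, -⟩ := hv2
        exact absurd hM (by simp)
      · intro x hx y hy
        rw [Finset.mem_filter] at hx hy
        obtain ⟨-, A, rfl, hAr, hAi⟩ := hx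
        obtain ⟨-, M, rfl, hMw, hMi⟩ := hy
        rw [biIntGraph, SimpleGraph.fromRel_adj]
        refine ⟨by simp, Or.inl ⟨A, M, rfl, rfl, hAr, hMw, ?_⟩⟩
        rw [Finset.disjoint_left]
        exact fun a ha ha' => hMi a ha' (hAi a ha)
    · intro x y hxy
      rw [biIntGraph, SimpleGraph.fromRel_adj] at hxy
      obtain ⟨hne, h | h⟩ := hxy
      · obtain ⟨L, M, rfl, rfl, hL, hM, hd⟩ := h
        have h1 := hB L M hd hL hM
        obtain ⟨i, hi⟩ := Finset.card_pos.mp (lt_of_lt_of_le one_pos h1)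
        rw [Finset.mem_sdiff] at hi
        have hinf := Finset.mem_inf.mp hi.1
        have hsup : ∀ m ∈ M, i ∉ B m := fun m hm hmem =>
          hi.2 (Finset.mem_sup.mpr ⟨m, hm, hmem⟩)
        rw [Nat.succ_le_iff, Nat.card_pos_iff]
        refine ⟨⟨⟨i, Or.inl ⟨?_, ?_⟩⟩⟩, inferInstance⟩
        · exact Finset.mem_filter.mpr ⟨Finset.mem_univ _, L, rfl, hL, hinf⟩
        · exact Finset.mem_filter.mpr ⟨Finset.mem_univ _, M, rfl, hM, hsup⟩
      · obtain ⟨L, M, rfl, rfl, hL, hM, hd⟩ := h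
        have h1 := hB L M hd hL hM
        obtain ⟨i, hi⟩ := Finset.card_pos.mp (lt_of_lt_of_le one_pos h1)
        rw [Finset.mem_sdiff] at hi
        have hinf := Finset.mem_inf.mp hi.1
        have hsup : ∀ m ∈ M, i ∉ B m := fun m hm hmem =>
          hi.2 (Finset.mem_sup.mpr ⟨m, hm, hmem⟩)
        rw [Nat.succ_le_iff, Nat.card_pos_iff]
        refine ⟨⟨⟨i, Or.inr ⟨?_, ?_⟩⟩⟩, inferInstance⟩
        · exact Finset.mem_filter.mpr ⟨Finset.mem_univ _, L, rfl, hL, hinf⟩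
        · exact Finset.mem_filter.mpr ⟨Finset.mem_univ _, M, rfl, hM, hsup⟩
  · rintro ⟨F, hF1, hF2⟩
    refine ⟨fun j => Finset.univ.filter fun i =>
      ∃ A : Finset (Fin t), j ∈ A ∧ (Sum.inl A ∈ (F i).1 ∨ Sum.inl A ∈ (F i).2), ?_⟩
    intro L M hd hL hM
    have hadj : (biIntGraph t r w).Adj (Sum.inl L) (Sum.inr M) := by
      rw [biIntGraph, SimpleGraph.fromRel_adj]
      exact ⟨by simp, Or.inl ⟨L, M, rfl, rfl, hL, hM, hd⟩⟩
    have hc := hF2 _ _ hadj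
    have hne : Nonempty {i : Fin n //
        (Sum.inl L ∈ (F i).1 ∧ Sum.inr M ∈ (F i).2) ∨
        (Sum.inr M ∈ (F i).1 ∧ Sum.inl L ∈ (F i).2)} :=
      (Nat.card_pos_iff.mp (lt_of_lt_of_le one_pos hc)).1
    obtain ⟨i, hcov⟩ := hne
    have hmemB : ∀ j : Fin t, (∃ A : Finset (Fin t), j ∈ A ∧
        (Sum.inl A ∈ (F i).1 ∨ Sum.inl A ∈ (F i).2)) ↔
        i ∈ Finset.univ.filter fun i => ∃ A : Finset (Fin t), j ∈ A ∧
          (Sum.inl A ∈ (F i).1 ∨ Sum.inl A ∈ (F i).2) := by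
      intro j; simp [Finset.mem_filter]
    have hkey : ∀ A : Finset (Fin t), (Sum.inl A ∈ (F i).1 ∨ Sum.inl A ∈ (F i).2) →
        Disjoint A M := by
      intro A hA
      rcases hcov with ⟨hL1, hM2⟩ | ⟨hM1, hL2⟩
      · rcases hA with hA1 | hA2
        · have h := (hF1 i).2 _ hA1 _ hM2
          rw [biIntGraph, SimpleGraph.fromRel_adj] at h
          rcases h.2 with ⟨A', B', h1, h2, -, -, h3⟩ | ⟨A', B', h1, h2, -⟩
          · obtain rfl : A = A' := Sum.inl.inj h1
            obtain rfl : M = B' := Sum.inr.inj h2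
            exact h3
          · exact absurd h1 (by simp)
        · have h := (hF1 i).2 _ hL1 _ hA2
          rw [biIntGraph, SimpleGraph.fromRel_adj] at h
          rcases h.2 with ⟨A', B', h1, h2, -⟩ | ⟨A', B', h1, h2, -⟩
          · exact absurd h2 (by simp)
          · exact absurd h2 (by simp)
      · rcases hA with hA1 | hA2
        · have h := (hF1 i).2 _ hA1 _ hL2
          rw [biIntGraph, SimpleGraph.fromRel_adj] at h
          rcases h.2 with ⟨A', B', h1, h2, -⟩ | ⟨A', B', h1, h2, -⟩
          · exact absurd h2 (by simp)
          · exact absurd h2 (by simp)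
        · have h := (hF1 i).2 _ hM1 _ hA2
          rw [biIntGraph, SimpleGraph.fromRel_adj] at h
          rcases h.2 with ⟨A', B', h1, h2, -⟩ | ⟨A', B', h1, h2, -, -, h3⟩
          · exact absurd h1 (by simp)
          · obtain rfl : A = A' := Sum.inl.inj h1
            obtain rfl : M = B' := Sum.inr.inj h2
            exact h3
    have hi : i ∈ ((L.inf fun j => Finset.univ.filter fun i =>
        ∃ A : Finset (Fin t), j ∈ A ∧ (Sum.inl A ∈ (F i).1 ∨ Sum.inl A ∈ (F i).2)) \
        (M.sup fun j => Finset.univ.filter fun i =>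
        ∃ A : Finset (Fin t), j ∈ A ∧ (Sum.inl A ∈ (F i).1 ∨ Sum.inl A ∈ (F i).2))) := by
      rw [Finset.mem_sdiff]
      constructor
      · rw [Finset.mem_inf]
        intro l hl
        simp only [Finset.mem_filter, Finset.mem_univ, true_and]
        exact ⟨L, hl, hcov.imp And.left And.right⟩
      · intro hsup
        rw [Finset.mem_sup] at hsup
        obtain ⟨m, hm, hmem⟩ := hsup
        simp only [Finset.mem_filter, Finset.mem_univ, true_and] at hmem
        obtain ⟨A, hmA, hAmem⟩ := hmem
        exact (Finset.disjoint_left.mp (hkey A hAmem) hmA) hm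
    exact Finset.one_le_card.mpr ⟨i, hi⟩
end

section
/- For all positive integers r, w, d, t with w ≤ r and t ≥ r + w, N((r,w;d),t) = bc_d(I_t(r,w)), i.e. the minimum number of points of an (r,w;d)-cover-free family with t blocks equals the d-biclique covering number of the bi-intersection graph I_t(r,w). -/
open Finset in
private lemma biInt_adj_inl_inr {t r w : ℕ} {A M : Finset (Fin t)}
    (h : (biIntGraph t r w).Adj (Sum.inl A) (Sum.inr M)) : Disjoint A M := by
  rw [biIntGraph, SimpleGraph.fromRel_adj] at h
  rcases h.2 with ⟨A', M', hA, hM, _, _, hdis⟩ | ⟨A', M', hA, hM, _, _, hdis⟩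
  · cases hA; cases hM; exact hdis
  · simp at hM

private lemma biInt_not_adj_inl_inl {t r w : ℕ} {A A' : Finset (Fin t)} :
    ¬ (biIntGraph t r w).Adj (Sum.inl A) (Sum.inl A') := by
  rw [biIntGraph, SimpleGraph.fromRel_adj]
  rintro ⟨_, ⟨_, _, _, h, _⟩ | ⟨_, _, _, h, _⟩⟩ <;> simp at h

private lemma biInt_not_adj_inr_inr {t r w : ℕ} {A A' : Finset (Fin t)} :
    ¬ (biIntGraph t r w).Adj (Sum.inr A) (Sum.inr A') := by
  rw [biIntGraph, SimpleGraph.fromRel_adj]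
  rintro ⟨_, ⟨_, _, h, _⟩ | ⟨_, _, h, _⟩⟩ <;> simp at h

/-- For positive integers `r, w, d, t` with `w ≤ r` and `t ≥ r + w`,
`N((r,w;d),t) = bc_d(I_t(r,w))`. -/
theorem cff_eq_d_biclique_cover (r w d t : ℕ) (hw : 0 < w) (hwr : w ≤ r) (hd : 0 < d)
    (ht : r + w ≤ t) :
    Ncff r w d t = bcD (biIntGraph t r w) d := by
  classical
  unfold Ncff bcD
  rw [if_neg (by omega)]
  congr 1
  ext n
  simp only [Set.mem_setOf_eq]
  constructor
  · -- CFF → biclique cover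
    rintro ⟨B, hB⟩
    refine ⟨fun i =>
      ((Finset.univ.filter (fun A : Finset (Fin t) => A.card = r ∧ ∀ a ∈ A, i ∈ B a)).image
        Sum.inl,
       (Finset.univ.filter (fun M : Finset (Fin t) => M.card = w ∧ ∀ m ∈ M, i ∉ B m)).image
        Sum.inr), ?_, ?_⟩
    · intro i
      constructor
      · rw [Finset.disjoint_left]
        rintro x hx hy
        simp only [Finset.mem_image, Finset.mem_filter] at hx hy
        obtain ⟨A, _, rfl⟩ := hx
        obtain ⟨M, _, hM⟩ := hy
        cases hM
      · rintro x hx y hy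
        simp only [Finset.mem_image, Finset.mem_filter, Finset.mem_univ, true_and] at hx hy
        obtain ⟨A, ⟨hAr, hAi⟩, rfl⟩ := hx
        obtain ⟨M, ⟨hMw, hMi⟩, rfl⟩ := hy
        rw [biIntGraph, SimpleGraph.fromRel_adj]
        refine ⟨by simp, Or.inl ⟨A, M, rfl, rfl, hAr, hMw, ?_⟩⟩
        rw [Finset.disjoint_left]
        intro a haA haM
        exact hMi a haM (hAi a haA)
    · intro x y hAdj
      rw [biIntGraph, SimpleGraph.fromRel_adj] at hAdj
      -- In both cases we reduce to an (L, M) pair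
      have key : ∀ (L M : Finset (Fin t)), L.card = r → M.card = w → Disjoint L M →
          ∀ P : Fin n → Prop, (∀ i, (∀ a ∈ L, i ∈ B a) → (∀ m ∈ M, i ∉ B m) → P i) →
          d ≤ Nat.card {i : Fin n // P i} := by
        intro L M hL hM hdis P hP
        have h1 := hB L M hdis hL hM
        have h2 : (L.inf B) \ (M.sup B) ⊆ Finset.univ.filter P := by
          intro i hi
          rw [Finset.mem_sdiff, Finset.mem_inf] at hi
          refine Finset.mem_filter.2 ⟨Finset.mem_univ _, hP i hi.1 ?_⟩
          intro m hm him
          exact hi.2 (Finset.mem_sup.2 ⟨m, hm, him⟩)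
        calc d ≤ ((L.inf B) \ (M.sup B)).card := h1
          _ ≤ (Finset.univ.filter P).card := Finset.card_le_card h2
          _ = Nat.card {i : Fin n // P i} := by
              simp [Nat.card_eq_fintype_card, Fintype.card_subtype]
      rcases hAdj.2 with ⟨L, M, rfl, rfl, hL, hM, hdis⟩ | ⟨L, M, rfl, rfl, hL, hM, hdis⟩
      · refine key L M hL hM hdis _ (fun i h1 h2 => Or.inl ⟨?_, ?_⟩) <;>
          simp only [Finset.mem_image, Finset.mem_filter, Finset.mem_univ, true_and]
        · exact ⟨L, ⟨hL, h1⟩, rfl⟩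
        · exact ⟨M, ⟨hM, h2⟩, rfl⟩
      · refine key L M hL hM hdis _ (fun i h1 h2 => Or.inr ⟨?_, ?_⟩) <;>
          simp only [Finset.mem_image, Finset.mem_filter, Finset.mem_univ, true_and]
        · exact ⟨L, ⟨hL, h1⟩, rfl⟩
        · exact ⟨M, ⟨hM, h2⟩, rfl⟩
  · -- biclique cover → CFF
    rintro ⟨F, hF1, hF2⟩
    refine ⟨fun j => Finset.univ.filter
      (fun i => ∃ A : Finset (Fin t), j ∈ A ∧
        (Sum.inl A ∈ (F i).1 ∨ Sum.inl A ∈ (F i).2)), ?_⟩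
    intro L M hdis hL hM
    have hAdj : (biIntGraph t r w).Adj (Sum.inl L) (Sum.inr M) := by
      rw [biIntGraph, SimpleGraph.fromRel_adj]
      exact ⟨by simp, Or.inl ⟨L, M, rfl, rfl, hL, hM, hdis⟩⟩
    have h2 := hF2 _ _ hAdj
    set P : Fin n → Prop := fun i =>
      (Sum.inl L ∈ (F i).1 ∧ Sum.inr M ∈ (F i).2) ∨
      (Sum.inr M ∈ (F i).1 ∧ Sum.inl L ∈ (F i).2) with hP
    have hsub : Finset.univ.filter P ⊆
        (L.inf (fun j => Finset.univ.filter
          (fun i => ∃ A : Finset (Fin t), j ∈ A ∧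
            (Sum.inl A ∈ (F i).1 ∨ Sum.inl A ∈ (F i).2)))) \
        (M.sup (fun j => Finset.univ.filter
          (fun i => ∃ A : Finset (Fin t), j ∈ A ∧
            (Sum.inl A ∈ (F i).1 ∨ Sum.inl A ∈ (F i).2)))) := by
      intro i hi
      rw [Finset.mem_filter] at hi
      rw [Finset.mem_sdiff, Finset.mem_inf]
      rcases hi.2 with ⟨hL1, hM2⟩ | ⟨hM1, hL2⟩
      · constructor
        · intro j hj
          exact Finset.mem_filter.2 ⟨Finset.mem_univ _, L, hj, Or.inl hL1⟩
        · intro hsup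
          obtain ⟨m, hmM, him⟩ := Finset.mem_sup.1 hsup
          obtain ⟨A, hmA, hA1 | hA2⟩ := (Finset.mem_filter.1 him).2
          · have := biInt_adj_inl_inr ((hF1 i).2 _ hA1 _ hM2)
            exact Finset.disjoint_left.1 this hmA hmM
          · exact biInt_not_adj_inl_inl ((hF1 i).2 _ hL1 _ hA2)
      · constructor
        · intro j hj
          exact Finset.mem_filter.2 ⟨Finset.mem_univ _, L, hj, Or.inr hL2⟩
        · intro hsup
          obtain ⟨m, hmM, him⟩ := Finset.mem_sup.1 hsup
          obtain ⟨A, hmA, hA1 | hA2⟩ := (Finset.mem_filter.1 him).2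
          · exact biInt_not_adj_inl_inl ((hF1 i).2 _ hA1 _ hL2)
          · have := biInt_adj_inl_inr ((hF1 i).2 _ hM1 _ hA2).symm
            exact Finset.disjoint_left.1 this hmA hmM
    calc d ≤ Nat.card {i : Fin n // P i} := h2
      _ = (Finset.univ.filter P).card := by
          simp [Nat.card_eq_fintype_card, Fintype.card_subtype]
      _ ≤ _ := Finset.card_le_card hsub
end

section
/- For all positive integers r, w, t with w ≤ r and t ≥ r + w, N((r,w),t) ≥ C(r+w, r), where C(·,·) denotes the binomial coefficient. -/
/-- Any (r,w;1)-CFF has at least C(r+w,r) points. -/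
theorem cff_main {r w n t : ℕ} (ht : r + w ≤ t)
    (B : Fin t → Finset (Fin n)) (h : IsCFF r w 1 n t B) :
    (r + w).choose r ≤ n := by
  classical
  have hcard : r + w ≤ (Finset.univ : Finset (Fin t)).card := by simpa using ht
  obtain ⟨T, -, hT⟩ := Finset.exists_subset_card_eq hcard
  have key : ∀ L ∈ T.powersetCard r, ((L.inf B) \ ((T \ L).sup B)).Nonempty := by
    intro L hL
    rw [Finset.mem_powersetCard] at hL
    have hd : Disjoint L (T \ L) := Finset.disjoint_sdiff
    have hc : (T \ L).card = w := by
      rw [Finset.card_sdiff_of_subset hL.1, hT, hL.2]; omega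
    have := h L (T \ L) hd hL.2 hc
    rwa [Finset.one_le_card] at this
  obtain ⟨L₀, hL₀⟩ := Finset.powersetCard_nonempty.mpr (by omega : r ≤ T.card)
  have hnn : Nonempty (Fin n) := ⟨(key L₀ hL₀).choose⟩
  set f : Finset (Fin t) → Fin n := fun L =>
    if hL : ((L.inf B) \ ((T \ L).sup B)).Nonempty then hL.choose
    else Classical.choice hnn with hf
  have hmem : ∀ L ∈ T.powersetCard r, f L ∈ (L.inf B) \ ((T \ L).sup B) := by
    intro L hL
    simp only [hf, dif_pos (key L hL)]
    exact (key L hL).choose_spec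
  have hinj : Set.InjOn f (T.powersetCard r) := by
    intro L₁ h₁ L₂ h₂ hfe
    by_contra hne
    have hc₁ := (Finset.mem_powersetCard.mp h₁)
    have hc₂ := (Finset.mem_powersetCard.mp h₂)
    have : ¬ L₁ ⊆ L₂ := fun hs => hne (Finset.eq_of_subset_of_card_le hs (by omega))
    obtain ⟨i, hi₁, hi₂⟩ := Finset.not_subset.mp this
    have hx₁ := hmem L₁ h₁
    have hx₂ := hmem L₂ h₂
    rw [Finset.mem_sdiff] at hx₁ hx₂
    have hBi : f L₁ ∈ B i := Finset.le_iff_subset.mp (Finset.inf_le hi₁) hx₁.1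
    have hiT : i ∈ T \ L₂ := Finset.mem_sdiff.mpr ⟨hc₁.1 hi₁, hi₂⟩
    exact hx₂.2 (Finset.mem_sup.mpr ⟨i, hiT, hfe ▸ hBi⟩)
  have := Finset.card_le_card_of_injOn f (fun _ _ => Finset.mem_univ _) hinj
  rw [Finset.card_powersetCard, hT] at this
  simpa using this

/-- There exists a CFF for n = 2^t: an (r,w;1)-CFF exists, so the set is nonempty. -/
theorem cff_exists (r w t : ℕ) :
    ∃ B : Fin t → Finset (Fin (2 ^ t)), IsCFF r w 1 (2 ^ t) t B := by
  classical
  have hcard : Fintype.card (Fin t → Bool) = 2 ^ t := by simp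
  let e : (Fin t → Bool) ≃ Fin (2 ^ t) := Fintype.equivFinOfCardEq hcard
  refine ⟨fun i => Finset.univ.filter (fun x => e.symm x i = true), ?_⟩
  intro L M hdis hL hM
  rw [Finset.one_le_card]
  refine ⟨e (fun i => decide (i ∈ L)), ?_⟩
  rw [Finset.mem_sdiff]
  constructor
  · rw [Finset.mem_inf]
    intro l hl
    simp [e.symm_apply_apply, hl]
  · rw [Finset.mem_sup]
    rintro ⟨m, hm, hmem⟩
    have : m ∉ L := fun hmL => (Finset.disjoint_left.mp hdis hmL) hm
    simp [e.symm_apply_apply, this] at hmem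

/-- For positive integers `r, w, t` with `w ≤ r` and `t ≥ r + w`,
`N((r,w),t) ≥ C(r+w, r)`. -/
theorem cff_ge_choose (r w t : ℕ) (hw : 0 < w) (hwr : w ≤ r) (ht : r + w ≤ t) :
    (r + w).choose r ≤ Ncff r w 1 t := by
  have hr : 0 < r := lt_of_lt_of_le hw hwr
  rw [Ncff, if_neg (by omega)]
  refine le_csInf ⟨2 ^ t, cff_exists r w t⟩ ?_
  rintro n ⟨B, hB⟩
  exact cff_main ht B hB
end

section
/- For every finite simple graph G that contains no 4-cycle C₄ as a subgraph, the biclique covering number of G equals the vertex covering number of G: bc(G) = β(G). -/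
/-- `vcNum G` = `β(G)`, the minimum size of a vertex cover of `G`. -/
noncomputable def vcNum {V : Type*} [Fintype V] (G : SimpleGraph V) : ℕ :=
  sInf {k : ℕ | ∃ K : Finset V, K.card = k ∧ ∀ ⦃x y : V⦄, G.Adj x y → x ∈ K ∨ y ∈ K}

/-- For every finite simple graph `G` with no 4-cycle as a subgraph,
the biclique covering number of `G` equals its vertex covering number. -/
theorem bc_eq_vertexCover_of_C4_free {V : Type*} [Fintype V] (G : SimpleGraph V)
    (hC4 : ∀ a b c d : V, a ≠ b → a ≠ c → a ≠ d → b ≠ c → b ≠ d → c ≠ d →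
      ¬(G.Adj a b ∧ G.Adj b c ∧ G.Adj c d ∧ G.Adj d a)) :
    bcD G 1 = vcNum G := by
  classical
  -- the vertex-cover set is nonempty
  have hVCne : {k : ℕ | ∃ K : Finset V, K.card = k ∧
      ∀ ⦃x y : V⦄, G.Adj x y → x ∈ K ∨ y ∈ K}.Nonempty :=
    ⟨Fintype.card V, Finset.univ, Finset.card_univ, fun x y _ => Or.inl (Finset.mem_univ x)⟩
  obtain ⟨K, hKcard, hKcov⟩ : ∃ K : Finset V, K.card = vcNum G ∧
      ∀ ⦃x y : V⦄, G.Adj x y → x ∈ K ∨ y ∈ K := Nat.sInf_mem hVCne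
  -- bcD ≤ vcNum : star construction
  have hbc_mem : vcNum G ∈ {n : ℕ | ∃ F : Fin n → Finset V × Finset V,
      IsBicliqueCoverD G 1 n F} := by
    refine ⟨fun i => ({(K.equivFin.symm (Fin.cast hKcard.symm i) : V)},
      G.neighborFinset (K.equivFin.symm (Fin.cast hKcard.symm i) : V)), ?_, ?_⟩
    · intro i
      constructor
      · simp [Finset.disjoint_left]
      · intro x hx y hy
        simp only [Finset.mem_singleton] at hx
        subst hx
        exact (SimpleGraph.mem_neighborFinset _ _ _).1 hy
    · intro x y hxy
      have hex : ∃ i : Fin (vcNum G),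
          (x ∈ ({(K.equivFin.symm (Fin.cast hKcard.symm i) : V)} : Finset V) ∧
            y ∈ G.neighborFinset (K.equivFin.symm (Fin.cast hKcard.symm i) : V)) ∨
          (y ∈ ({(K.equivFin.symm (Fin.cast hKcard.symm i) : V)} : Finset V) ∧
            x ∈ G.neighborFinset (K.equivFin.symm (Fin.cast hKcard.symm i) : V)) := by
        rcases hKcov hxy with hx | hy
        · exact ⟨Fin.cast hKcard (K.equivFin ⟨x, hx⟩), Or.inl (by simp [hxy])⟩
        · exact ⟨Fin.cast hKcard (K.equivFin ⟨y, hy⟩), Or.inr (by simp [hxy.symm])⟩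
      obtain ⟨i, hi⟩ := hex
      haveI : Nonempty {i : Fin (vcNum G) //
          (x ∈ ({(K.equivFin.symm (Fin.cast hKcard.symm i) : V)} : Finset V) ∧
            y ∈ G.neighborFinset (K.equivFin.symm (Fin.cast hKcard.symm i) : V)) ∨
          (y ∈ ({(K.equivFin.symm (Fin.cast hKcard.symm i) : V)} : Finset V) ∧
            x ∈ G.neighborFinset (K.equivFin.symm (Fin.cast hKcard.symm i) : V))} := ⟨⟨i, hi⟩⟩
      exact Nat.one_le_iff_ne_zero.2 (Nat.card_pos).ne'
  have h1 : bcD G 1 ≤ vcNum G := Nat.sInf_le hbc_mem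
  -- vcNum ≤ bcD : C4-freeness
  have h2 : vcNum G ≤ bcD G 1 := by
    obtain ⟨F, hFbic, hFcov⟩ : ∃ F : Fin (bcD G 1) → Finset V × Finset V,
        IsBicliqueCoverD G 1 (bcD G 1) F := Nat.sInf_mem ⟨_, hbc_mem⟩
    -- each biclique has a small side
    have hsmall : ∀ i : Fin (bcD G 1), (F i).1.card ≤ 1 ∨ (F i).2.card ≤ 1 := by
      intro i
      by_contra h
      push_neg at h
      obtain ⟨h1', h2'⟩ := h
      obtain ⟨a, ha, b, hb, hab⟩ := Finset.one_lt_card.1 h1'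
      obtain ⟨c, hc, d, hd, hcd⟩ := Finset.one_lt_card.1 h2'
      obtain ⟨hdisj, hadj⟩ := hFbic i
      have hne : ∀ x ∈ (F i).1, ∀ y ∈ (F i).2, x ≠ y := fun x hx y hy =>
        fun hq => (Finset.disjoint_left.1 hdisj hx) (hq ▸ hy)
      exact hC4 a c b d (hne a ha c hc) hab (hne a ha d hd)
        (hne b hb c hc).symm hcd (hne b hb d hd)
        ⟨hadj a ha c hc, (hadj b hb c hc).symm, hadj b hb d hd, (hadj a ha d hd).symm⟩
    -- build vertex cover
    set Kc : Finset V := Finset.univ.biUnion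
      (fun i : Fin (bcD G 1) => if (F i).1.card ≤ 1 then (F i).1 else (F i).2) with hKc
    have hcard : Kc.card ≤ bcD G 1 := by
      calc Kc.card ≤ ∑ i : Fin (bcD G 1), (if (F i).1.card ≤ 1 then (F i).1 else (F i).2).card :=
            Finset.card_biUnion_le
        _ ≤ ∑ _i : Fin (bcD G 1), 1 := by
            apply Finset.sum_le_sum
            intro i _
            by_cases h : (F i).1.card ≤ 1
            · simp [h]
            · have := (hsmall i).resolve_left h
              simpa [h] using this
        _ = bcD G 1 := by simp
    have hcov : ∀ ⦃x y : V⦄, G.Adj x y → x ∈ Kc ∨ y ∈ Kc := by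
      intro x y hxy
      have hne : Nonempty {i : Fin (bcD G 1) // (x ∈ (F i).1 ∧ y ∈ (F i).2) ∨
          (y ∈ (F i).1 ∧ x ∈ (F i).2)} :=
        (Nat.card_pos_iff.1 (Nat.lt_of_lt_of_le Nat.zero_lt_one (hFcov x y hxy))).1
      obtain ⟨i, hi⟩ := hne
      by_cases h : (F i).1.card ≤ 1
      · rcases hi with ⟨hx, _⟩ | ⟨hy, _⟩
        · exact Or.inl (Finset.mem_biUnion.2 ⟨i, Finset.mem_univ i, by simp [h, hx]⟩)
        · exact Or.inr (Finset.mem_biUnion.2 ⟨i, Finset.mem_univ i, by simp [h, hy]⟩)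
      · rcases hi with ⟨_, hy⟩ | ⟨_, hx⟩
        · exact Or.inr (Finset.mem_biUnion.2 ⟨i, Finset.mem_univ i, by simp [h, hy]⟩)
        · exact Or.inl (Finset.mem_biUnion.2 ⟨i, Finset.mem_univ i, by simp [h, hx]⟩)
    calc vcNum G ≤ Kc.card := Nat.sInf_le ⟨Kc, rfl, hcov⟩
      _ ≤ bcD G 1 := hcard
  exact le_antisymm h1 h2
end

section
/- For all positive integers r, w, t with w ≤ r, if t = r + w or t = r + w + 1 then N((r,w),t) = min{C(t,r), C(t,w)} = C(t,w), where C(·,·) denotes the binomial coefficient. -/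
open Finset

lemma cff_witness {r w n t : ℕ} {B : Fin t → Finset (Fin n)} (hB : IsCFF r w 1 n t B)
    {L M : Finset (Fin t)} (hd : Disjoint L M) (hL : L.card = r) (hM : M.card = w) :
    ∃ x : Fin n, (∀ i ∈ L, x ∈ B i) ∧ ∀ i ∈ M, x ∉ B i := by
  obtain ⟨x, hx⟩ := Finset.card_pos.mp (lt_of_lt_of_le one_pos (hB L M hd hL hM))
  rw [Finset.mem_sdiff] at hx
  exact ⟨x, fun i hi => Finset.mem_inf.mp hx.1 i hi,
    fun i hi hxB => hx.2 (Finset.mem_sup.mpr ⟨i, hi, hxB⟩)⟩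

lemma cff_upper {r w t : ℕ} (hrw : r + w ≤ t) :
    ∃ B : Fin t → Finset (Fin (t.choose w)), IsCFF r w 1 (t.choose w) t B := by
  classical
  have hc : Fintype.card {s : Finset (Fin t) // s.card = w} = t.choose w := by
    simp
  let e := Fintype.equivFinOfCardEq hc
  refine ⟨fun i => univ.filter fun x => i ∉ (e.symm x).1, ?_⟩
  intro L M hd hL hM
  rw [Finset.one_le_card]
  refine ⟨e ⟨M, hM⟩, Finset.mem_sdiff.mpr ⟨?_, ?_⟩⟩
  · rw [Finset.mem_inf]
    intro i hi
    simp only [mem_filter, mem_univ, true_and, Equiv.symm_apply_apply, e]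
    exact fun hiM => (Finset.disjoint_left.mp hd hi) hiM
  · rw [Finset.mem_sup]
    rintro ⟨i, hi, hix⟩
    simp only [mem_filter, mem_univ, true_and, Equiv.symm_apply_apply, e] at hix
    exact hix hi

lemma cff_lower {r w t n : ℕ} (hw : 0 < w) (hwr : w ≤ r)
    (ht : t = r + w ∨ t = r + w + 1)
    (B : Fin t → Finset (Fin n)) (hB : IsCFF r w 1 n t B) : t.choose w ≤ n := by
  classical
  set p : Fin n → Finset (Fin t) := fun x => univ.filter fun i => x ∉ B i with hp
  set P : Finset (Finset (Fin t)) := univ.image p with hPdef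
  have hPn : P.card ≤ n := le_trans Finset.card_image_le (by simp)
  set W : Finset (Finset (Fin t)) := (univ : Finset (Fin t)).powersetCard w with hWdef
  have hW : W.card = t.choose w := by simp [hWdef]
  rcases ht with ht | ht
  · -- t = r + w : every w-set is a pattern
    have hsub : W ⊆ P := by
      intro M hM
      have hMcard : M.card = w := (mem_powersetCard.mp hM).2
      have hLcard : Mᶜ.card = r := by
        rw [Finset.card_compl, hMcard]; simp [ht]
      obtain ⟨x, hx1, hx2⟩ := cff_witness hB disjoint_compl_left hLcard hMcard
      have : p x = M := by
        ext i
        simp only [hp, mem_filter, mem_univ, true_and]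
        constructor
        · intro hxB
          by_contra hiM
          exact hxB (hx1 i (Finset.mem_compl.mpr hiM))
        · exact hx2 i
      exact mem_image.mpr ⟨x, mem_univ x, this⟩
    calc t.choose w = W.card := hW.symm
      _ ≤ P.card := Finset.card_le_card hsub
      _ ≤ n := hPn
  · -- t = r + w + 1
    set P0 : Finset (Finset (Fin t)) := P.filter fun R => R.card = w with hP0def
    set P1 : Finset (Finset (Fin t)) := P.filter fun R => R.card = w + 1 with hP1def
    set H : Finset (Finset (Fin t)) := W.filter (· ∈ P) with hHdef
    set U : Finset (Finset (Fin t)) := W.filter (· ∉ P) with hUdef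
    have hHU : H.card + U.card = W.card := Finset.card_filter_add_card_filter_not _
    have hHle : H.card ≤ P0.card := by
      apply Finset.card_le_card
      intro M hM
      rw [hHdef, mem_filter] at hM
      exact mem_filter.mpr ⟨hM.2, (mem_powersetCard.mp hM.1).2⟩
    -- each unhappy M yields, for every j ∉ M, the pattern insert j M
    have hUkey : ∀ M ∈ U, ∀ j ∈ Mᶜ, insert j M ∈ P1 := by
      intro M hM j hj
      rw [hUdef, mem_filter] at hM
      obtain ⟨hMW, hMP⟩ := hM
      have hMcard : M.card = w := (mem_powersetCard.mp hMW).2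
      have hjM : j ∉ M := Finset.mem_compl.mp hj
      set L := Mᶜ.erase j with hLdef
      have hL : L.card = r := by
        rw [hLdef, Finset.card_erase_of_mem hj, Finset.card_compl, hMcard]
        simp only [Fintype.card_fin]
        omega
      have hdisj : Disjoint L M :=
        disjoint_compl_left.mono_left (Finset.erase_subset _ _)
      obtain ⟨x, hx1, hx2⟩ := cff_witness hB hdisj hL hMcard
      have hsub : M ⊆ p x := by
        intro i hi
        simp only [hp, mem_filter, mem_univ, true_and]
        exact hx2 i hi
      have hsub2 : p x ⊆ insert j M := by
        intro i hi
        by_contra hcon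
        simp only [mem_insert, not_or] at hcon
        have hiL : i ∈ L := Finset.mem_erase.mpr ⟨hcon.1, Finset.mem_compl.mpr hcon.2⟩
        have hxB := hx1 i hiL
        simp only [hp, mem_filter, mem_univ, true_and] at hi
        exact hi hxB
      have hne : p x ≠ M := by
        intro h
        exact hMP (h ▸ mem_image.mpr ⟨x, mem_univ x, rfl⟩)
      have hjx : j ∈ p x := by
        by_contra hjx
        apply hne
        apply Finset.Subset.antisymm _ hsub
        intro i hi
        rcases mem_insert.mp (hsub2 hi) with h | h
        · exact absurd (h ▸ hi) hjx
        · exact h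
      have hxeq : p x = insert j M :=
        Finset.Subset.antisymm hsub2 (Finset.insert_subset hjx hsub)
      refine mem_filter.mpr ⟨hxeq ▸ mem_image.mpr ⟨x, mem_univ x, rfl⟩, ?_⟩
      rw [Finset.card_insert_of_notMem hjM, hMcard]
    -- double counting : U.card * (r+1) ≤ P1.card * (w+1)
    have hcount : U.card * (r + 1) ≤ P1.card * (w + 1) := by
      apply Finset.card_mul_le_card_mul (fun M R => M ⊆ R)
      · intro M hM
        have hMcard : M.card = w :=
          (mem_powersetCard.mp (mem_filter.mp hM).1).2
        have himg : (Mᶜ.image fun j => insert j M) ⊆ P1.bipartiteAbove (fun M R => M ⊆ R) M := by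
          intro R hR
          obtain ⟨j, hj, rfl⟩ := mem_image.mp hR
          exact (Finset.mem_bipartiteAbove _).mpr ⟨hUkey M hM j hj, Finset.subset_insert _ _⟩
        have hinj : (Mᶜ.image fun j => insert j M).card = r + 1 := by
          rw [Finset.card_image_of_injOn, Finset.card_compl, hMcard]
          · simp only [Fintype.card_fin]; omega
          · intro a ha b hb hab
            simp only at hab
            have haM : a ∉ M := Finset.mem_compl.mp ha
            have hbM : b ∉ M := Finset.mem_compl.mp hb
            have : a ∈ insert b M := hab ▸ Finset.mem_insert_self a M
            rcases mem_insert.mp this with h | h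
            · exact h
            · exact absurd h haM
        calc r + 1 = (Mᶜ.image fun j => insert j M).card := hinj.symm
          _ ≤ _ := Finset.card_le_card himg
      · intro R hR
        have hRcard : R.card = w + 1 := (mem_filter.mp hR).2
        have : U.bipartiteBelow (fun M R => M ⊆ R) R ⊆ R.powersetCard w := by
          intro M hM
          rw [Finset.mem_bipartiteBelow] at hM
          exact mem_powersetCard.mpr
            ⟨hM.2, (mem_powersetCard.mp (mem_filter.mp hM.1).1).2⟩
        calc (U.bipartiteBelow (fun M R => M ⊆ R) R).card
            ≤ (R.powersetCard w).card := Finset.card_le_card this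
          _ = w + 1 := by rw [Finset.card_powersetCard, hRcard, Nat.choose_succ_self_right]
    have hUle : U.card ≤ P1.card := by
      have h2 : P1.card * (w + 1) ≤ P1.card * (r + 1) :=
        Nat.mul_le_mul_left _ (by omega)
      exact Nat.le_of_mul_le_mul_right (hcount.trans h2) (by omega)
    have hdisj01 : Disjoint P0 P1 := by
      rw [Finset.disjoint_left]
      intro R h0 h1
      have := (mem_filter.mp h0).2
      have := (mem_filter.mp h1).2
      omega
    calc t.choose w = W.card := hW.symm
      _ = H.card + U.card := hHU.symm
      _ ≤ P0.card + P1.card := Nat.add_le_add hHle hUle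
      _ = (P0 ∪ P1).card := (Finset.card_union_of_disjoint hdisj01).symm
      _ ≤ P.card := Finset.card_le_card
          (Finset.union_subset (Finset.filter_subset _ _) (Finset.filter_subset _ _))
      _ ≤ n := hPn

lemma choose_w_le_choose_r {r w t : ℕ} (hwr : w ≤ r)
    (ht : t = r + w ∨ t = r + w + 1) : t.choose w ≤ t.choose r := by
  rcases ht with ht | ht
  · subst ht
    rw [Nat.choose_symm_add]
  · subst ht
    have h1 : (r + w + 1).choose r = (r + w + 1).choose (w + 1) := by
      rw [← Nat.choose_symm (by omega)]
      congr 1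
      omega
    rw [h1]
    have h2 := Nat.choose_succ_right_eq (r + w + 1) w
    have h3 : r + w + 1 - w = r + 1 := by omega
    rw [h3] at h2
    have h4 : (r + w + 1).choose w * (w + 1) ≤ (r + w + 1).choose w * (r + 1) :=
      Nat.mul_le_mul_left _ (by omega)
    rw [← h2] at h4
    exact Nat.le_of_mul_le_mul_right h4 (by omega)

/-- For positive integers `r, w, t` with `w ≤ r`, if `t = r + w` or `t = r + w + 1`,
then `N((r,w),t) = min{C(t,r), C(t,w)} = C(t,w)`. -/
theorem cff_small_t (r w t : ℕ) (hw : 0 < w) (hwr : w ≤ r)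
    (ht : t = r + w ∨ t = r + w + 1) :
    Ncff r w 1 t = min (t.choose r) (t.choose w) ∧ Ncff r w 1 t = t.choose w := by
  have hr : 0 < r := lt_of_lt_of_le hw hwr
  have hmain : Ncff r w 1 t = t.choose w := by
    rw [Ncff, if_neg (by omega)]
    have hrw : r + w ≤ t := by omega
    have hmem : t.choose w ∈ {n : ℕ | ∃ B : Fin t → Finset (Fin n), IsCFF r w 1 n t B} :=
      cff_upper hrw
    apply le_antisymm (Nat.sInf_le hmem)
    obtain ⟨B, hB⟩ := Nat.sInf_mem (Set.nonempty_of_mem hmem)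
    exact cff_lower hw hwr ht B hB
  refine ⟨?_, hmain⟩
  rw [hmain, min_eq_right (choose_w_le_choose_r hwr ht)]
end

section
/- Let g, h, r, w, d, t be positive integers with w ≤ r, and let 𝓕 = {(A₁,B₁), …, (A_g,B_g)} be a weakly cross-intersecting set-pairs on a ground set of cardinality h such that |A_i| ≤ r and |B_i| ≤ w for every 1 ≤ i ≤ g. If t ≥ max{h, r+w}, then N((r,w;d),t) ≥ Σ_{i=1}^g N((r−|A_i|, w−|B_i|; d), t−|A_i|−|B_i|). -/
lemma exists_cff (r w d t : ℕ) :
    ∃ n, ∃ B : Fin t → Finset (Fin n), IsCFF r w d n t B := by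
  classical
  refine ⟨Fintype.card (Finset (Fin t) × Fin d),
    fun j => Finset.univ.filter
      (fun x => j ∈ ((Fintype.equivFin (Finset (Fin t) × Fin d)).symm x).1), ?_⟩
  set e := Fintype.equivFin (Finset (Fin t) × Fin d) with he
  intro L M hdis hL hM
  have hcard : (Finset.univ : Finset (Fin d)).card = d := by simp
  refine le_trans hcard.ge ?_
  apply Finset.card_le_card_of_injOn (fun k => e (L, k))
  · intro k _
    rw [Finset.mem_coe, Finset.mem_sdiff]
    constructor
    · rw [Finset.mem_inf]
      intro l hl
      simp only [Finset.mem_filter, Finset.mem_univ, true_and, Equiv.symm_apply_apply]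
      exact hl
    · rw [Finset.mem_sup]
      rintro ⟨m, hm, hmem⟩
      simp only [Finset.mem_filter, Finset.mem_univ, true_and, Equiv.symm_apply_apply] at hmem
      exact Finset.disjoint_left.mp hdis hmem hm
  · intro k1 _ k2 _ hk
    have h2 := e.injective hk
    simpa using congrArg Prod.snd h2

lemma ncff_le {r w d t n : ℕ} (hn : 1 ≤ n)
    (h : ∃ B : Fin t → Finset (Fin n), IsCFF r w d n t B) :
    Ncff r w d t ≤ n := by
  unfold Ncff
  split
  · exact hn
  · exact Nat.sInf_le h

lemma ncff_sub_le {n t r w d a b : ℕ} (hd : 0 < d) (har : a ≤ r) (hbw : b ≤ w)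
    (hrw : r + w ≤ t)
    (Bk : Fin t → Finset (Fin n)) (hcff : IsCFF r w d n t Bk)
    (A' B' : Finset (Fin t)) (hab : Disjoint A' B')
    (hcA : A'.card = a) (hcB : B'.card = b) :
    Ncff (r - a) (w - b) d (t - a - b) ≤ ((A'.inf Bk) \ (B'.sup Bk)).card := by
  classical
  set X : Finset (Fin n) := (A'.inf Bk) \ (B'.sup Bk) with hXdef
  set S : Finset (Fin t) := Finset.univ \ (A' ∪ B') with hSdef
  have hScard : S.card = t - a - b := by
    rw [hSdef, Finset.card_sdiff_of_subset (Finset.subset_univ _),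
      Finset.card_union_of_disjoint hab, Finset.card_univ, Fintype.card_fin,
      hcA, hcB, Nat.sub_sub]
  have hc : t - a - b = S.card := hScard.symm
  set ι : Fin (t - a - b) → Fin t := fun j => (S.equivFin.symm (Fin.cast hc j) : Fin t) with hι
  have hιS : ∀ j, ι j ∈ S := fun j => (S.equivFin.symm (Fin.cast hc j)).2
  have hιA : ∀ j, ι j ∉ A' := by
    intro j hj
    have h1 := hιS j
    rw [hSdef, Finset.mem_sdiff] at h1
    exact h1.2 (Finset.mem_union_left _ hj)
  have hιB : ∀ j, ι j ∉ B' := by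
    intro j hj
    have h1 := hιS j
    rw [hSdef, Finset.mem_sdiff] at h1
    exact h1.2 (Finset.mem_union_right _ hj)
  have hιinj : Function.Injective ι := by
    intro j1 j2 hj
    have h1 := S.equivFin.symm.injective (Subtype.ext hj)
    exact Fin.ext (by simpa using congrArg Fin.val h1)
  set ιemb : Fin (t - a - b) ↪ Fin t := ⟨ι, hιinj⟩ with hιemb
  set B'' : Fin (t - a - b) → Finset (Fin X.card) := fun j =>
    Finset.univ.filter (fun y => (X.equivFin.symm y : Fin n) ∈ Bk (ι j)) with hB''
  have hcff' : IsCFF (r - a) (w - b) d X.card (t - a - b) B'' := by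
    intro L' M' hdis' hL' hM'
    set L : Finset (Fin t) := A' ∪ L'.map ιemb with hLdef
    set M : Finset (Fin t) := B' ∪ M'.map ιemb with hMdef
    have dA'M : Disjoint A' (M'.map ιemb) := by
      rw [Finset.disjoint_right]
      rintro x hx
      rw [Finset.mem_map] at hx
      obtain ⟨j, hj, rfl⟩ := hx
      exact hιA j
    have dA'L : Disjoint A' (L'.map ιemb) := by
      rw [Finset.disjoint_right]
      rintro x hx
      rw [Finset.mem_map] at hx
      obtain ⟨j, hj, rfl⟩ := hx
      exact hιA j
    have dB'M : Disjoint B' (M'.map ιemb) := by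
      rw [Finset.disjoint_right]
      rintro x hx
      rw [Finset.mem_map] at hx
      obtain ⟨j, hj, rfl⟩ := hx
      exact hιB j
    have dLB' : Disjoint (L'.map ιemb) B' := by
      rw [Finset.disjoint_left]
      rintro x hx
      rw [Finset.mem_map] at hx
      obtain ⟨j, hj, rfl⟩ := hx
      exact hιB j
    have dLM : Disjoint L M := by
      rw [hLdef, hMdef, Finset.disjoint_union_left, Finset.disjoint_union_right,
        Finset.disjoint_union_right]
      exact ⟨⟨hab, dA'M⟩, ⟨dLB', (Finset.disjoint_map ιemb).mpr hdis'⟩⟩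
    have hLcard : L.card = r := by
      rw [hLdef, Finset.card_union_of_disjoint dA'L, Finset.card_map, hcA, hL',
        Nat.add_sub_cancel' har]
    have hMcard : M.card = w := by
      rw [hMdef, Finset.card_union_of_disjoint dB'M, Finset.card_map, hcB, hM',
        Nat.add_sub_cancel' hbw]
    have hmain := hcff L M dLM hLcard hMcard
    refine le_trans hmain ?_
    apply Finset.card_le_card_of_surjOn (fun y => (X.equivFin.symm y : Fin n))
    intro x hx
    rw [Finset.mem_coe, Finset.mem_sdiff] at hx
    have hxX : x ∈ X := by
      have h1 : L.inf Bk ⊆ A'.inf Bk := Finset.inf_mono Finset.subset_union_left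
      have h2 : B'.sup Bk ⊆ M.sup Bk := Finset.sup_mono Finset.subset_union_left
      rw [hXdef]
      exact Finset.sdiff_subset_sdiff h1 h2 (Finset.mem_sdiff.mpr hx)
    refine ⟨X.equivFin ⟨x, hxX⟩, ?_, by simp⟩
    rw [Finset.mem_coe, Finset.mem_sdiff]
    constructor
    · rw [Finset.mem_inf]
      intro j hj
      rw [hB'']
      simp only [Finset.mem_filter, Finset.mem_univ, true_and, Equiv.symm_apply_apply]
      refine Finset.mem_inf.mp hx.1 (ι j) ?_
      exact Finset.mem_union_right _ (Finset.mem_map_of_mem ιemb hj)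
    · rw [Finset.mem_sup]
      rintro ⟨j, hj, hmem⟩
      rw [hB''] at hmem
      simp only [Finset.mem_filter, Finset.mem_univ, true_and,
        Equiv.symm_apply_apply] at hmem
      exact hx.2 (Finset.mem_sup.mpr
        ⟨ι j, Finset.mem_union_right _ (Finset.mem_map_of_mem ιemb hj), hmem⟩)
  have hm1 : 1 ≤ X.card := by
    obtain ⟨L', hL'sub, hL'card⟩ := Finset.exists_subset_card_eq
      (show r - a ≤ (Finset.univ : Finset (Fin (t - a - b))).card by
        rw [Finset.card_univ, Fintype.card_fin]; omega)
    obtain ⟨M', hM'sub, hM'card⟩ := Finset.exists_subset_card_eq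
      (show w - b ≤ (Finset.univ \ L').card by
        rw [Finset.card_sdiff_of_subset (Finset.subset_univ _), Finset.card_univ,
          Fintype.card_fin, hL'card]; omega)
    have hdis' : Disjoint L' M' := by
      rw [Finset.disjoint_right]
      intro x hxM hxL
      have h1 := hM'sub hxM
      rw [Finset.mem_sdiff] at h1
      exact h1.2 hxL
    have h2 := hcff' L' M' hdis' hL'card hM'card
    calc 1 ≤ d := hd
      _ ≤ ((L'.inf B'') \ (M'.sup B'')).card := h2
      _ ≤ Fintype.card (Fin X.card) := Finset.card_le_univ _ |>.trans (by simp)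
      _ = X.card := Fintype.card_fin _
  exact ncff_le hm1 ⟨B'', hcff'⟩

/-- Main theorem: if `{(A_i, B_i)}_{i<g}` is a weakly cross-intersecting set-pairs on a
ground set of size `h` with `|A_i| ≤ r`, `|B_i| ≤ w`, and `t ≥ max{h, r+w}`, then
`N((r,w;d),t) ≥ Σ_i N((r−|A_i|, w−|B_i|; d), t−|A_i|−|B_i|)`. -/
theorem cff_ge_sum_of_weakly_cross_intersecting (g h r w d t : ℕ)
    (hg : 0 < g) (hh : 0 < h) (hr : 0 < r) (hw : 0 < w) (hwr : w ≤ r) (hd : 0 < d)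
    (F : Fin g → Finset (Fin h) × Finset (Fin h))
    (hdisj : ∀ i, Disjoint (F i).1 (F i).2)
    (hcross : ∀ i j, i ≠ j → (((F i).1 ∩ (F j).2) ∪ ((F j).1 ∩ (F i).2)).Nonempty)
    (hA : ∀ i, (F i).1.card ≤ r) (hB : ∀ i, (F i).2.card ≤ w)
    (ht : max h (r + w) ≤ t) :
    ∑ i, Ncff (r - (F i).1.card) (w - (F i).2.card) d (t - (F i).1.card - (F i).2.card)
      ≤ Ncff r w d t := by
  classical
  have hht : h ≤ t := le_trans (le_max_left _ _) ht
  have hrw : r + w ≤ t := le_trans (le_max_right _ _) ht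
  have hSne : {n : ℕ | ∃ B : Fin t → Finset (Fin n), IsCFF r w d n t B}.Nonempty := by
    obtain ⟨n, B, hB⟩ := exists_cff r w d t
    exact ⟨n, B, hB⟩
  set n := sInf {n : ℕ | ∃ B : Fin t → Finset (Fin n), IsCFF r w d n t B} with hn
  have hNval : Ncff r w d t = n := by
    unfold Ncff
    rw [if_neg]
    push_neg
    exact ⟨hr.ne', hw.ne'⟩
  obtain ⟨Bk, hBk⟩ := Nat.sInf_mem hSne
  set emb := Fin.castLEEmb hht with hemb
  set Ai : Fin g → Finset (Fin t) := fun i => (F i).1.map emb with hAi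
  set Bi : Fin g → Finset (Fin t) := fun i => (F i).2.map emb with hBi
  set X : Fin g → Finset (Fin n) := fun i => ((Ai i).inf Bk) \ ((Bi i).sup Bk) with hXdef
  have step2 : ∀ i, Ncff (r - (F i).1.card) (w - (F i).2.card) d
      (t - (F i).1.card - (F i).2.card) ≤ (X i).card := by
    intro i
    exact ncff_sub_le hd (hA i) (hB i) hrw Bk hBk (Ai i) (Bi i)
      ((Finset.disjoint_map emb).mpr (hdisj i)) (Finset.card_map emb) (Finset.card_map emb)
  have hdisjX : ∀ i ∈ (Finset.univ : Finset (Fin g)), ∀ j ∈ (Finset.univ : Finset (Fin g)),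
      i ≠ j → Disjoint (X i) (X j) := by
    intro i _ j _ hij
    obtain ⟨l, hl⟩ := hcross i j hij
    rw [Finset.mem_union] at hl
    rw [Finset.disjoint_left]
    intro x hxi hxj
    rcases hl with hl | hl
    · rw [Finset.mem_inter] at hl
      have h1 : x ∈ Bk (emb l) :=
        Finset.mem_inf.mp (Finset.mem_sdiff.mp hxi).1 (emb l) (Finset.mem_map_of_mem emb hl.1)
      exact (Finset.mem_sdiff.mp hxj).2
        (Finset.mem_sup.mpr ⟨emb l, Finset.mem_map_of_mem emb hl.2, h1⟩)
    · rw [Finset.mem_inter] at hl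
      have h1 : x ∈ Bk (emb l) :=
        Finset.mem_inf.mp (Finset.mem_sdiff.mp hxj).1 (emb l) (Finset.mem_map_of_mem emb hl.1)
      exact (Finset.mem_sdiff.mp hxi).2
        (Finset.mem_sup.mpr ⟨emb l, Finset.mem_map_of_mem emb hl.2, h1⟩)
  calc ∑ i, Ncff (r - (F i).1.card) (w - (F i).2.card) d
        (t - (F i).1.card - (F i).2.card)
      ≤ ∑ i, (X i).card := Finset.sum_le_sum (fun i _ => step2 i)
    _ = (Finset.univ.biUnion X).card := (Finset.card_biUnion hdisjX).symm
    _ ≤ Fintype.card (Fin n) := le_trans (Finset.card_le_univ _) (by simp)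
    _ = n := Fintype.card_fin n
    _ = Ncff r w d t := hNval.symm
end

section
/- For all positive integers r, w, t with w ≤ r and t ≥ r + w, the maximum number of edges among the bicliques of the bi-intersection graph I_t(r,w) satisfies B(I_t(r,w)) = max_{t'+t''=t, t',t''≥0} C(t',r)·C(t'',w), where C(·,·) denotes the binomial coefficient; moreover the number of edges of I_t(r,w) equals C(t,r)·C(t−r,w). -/
/-- `maxBicliqueEdges G` = `B(G)`, the maximum number of edges among the bicliques
of `G`. -/
noncomputable def maxBicliqueEdges {V : Type*} (G : SimpleGraph V) : ℕ :=
  sSup {m : ℕ | ∃ X Y : Finset V, Disjoint X Y ∧ (∀ x ∈ X, ∀ y ∈ Y, G.Adj x y) ∧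
    m = X.card * Y.card}

open Finset

/-- Cross-disjoint families bound. -/
lemma crossBound {t r w : ℕ} (𝒜 ℬ : Finset (Finset (Fin t)))
    (hA : ∀ A ∈ 𝒜, A.card = r) (hB : ∀ B ∈ ℬ, B.card = w)
    (hd : ∀ A ∈ 𝒜, ∀ B ∈ ℬ, Disjoint A B) :
    ∃ t' t'' : ℕ, t' + t'' = t ∧ 𝒜.card * ℬ.card ≤ t'.choose r * t''.choose w := by
  set S : Finset (Fin t) := 𝒜.sup id with hS
  have hScard : S.card ≤ t := by
    simpa using S.card_le_univ
  refine ⟨S.card, t - S.card, by omega, ?_⟩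
  have h1 : 𝒜 ⊆ S.powersetCard r := by
    intro A hA'
    rw [mem_powersetCard]
    exact ⟨le_sup (f := id) hA', hA A hA'⟩
  have h2 : ℬ ⊆ (Sᶜ).powersetCard w := by
    intro B hB'
    rw [mem_powersetCard]
    refine ⟨fun i hi => ?_, hB B hB'⟩
    simp only [mem_compl, hS, Finset.mem_sup, id]
    rintro ⟨A, hA', hiA⟩
    simpa using (hd A hA' B hB').le_bot (mem_inter.2 ⟨hiA, hi⟩)
  have c1 := card_le_card h1
  have c2 := card_le_card h2
  rw [card_powersetCard] at c1 c2
  rw [card_compl, Fintype.card_fin] at c2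
  exact Nat.mul_le_mul c1 c2

lemma inlSide {t r w : ℕ} (X Y : Finset (Finset (Fin t) ⊕ Finset (Fin t)))
    (hadj : ∀ x ∈ X, ∀ y ∈ Y, (biIntGraph t r w).Adj x y)
    (y0 : Finset (Fin t) ⊕ Finset (Fin t)) (hy0 : y0 ∈ Y)
    (B0 : Finset (Fin t)) (hy0e : y0 = Sum.inr B0) :
    ∃ t' t'' : ℕ, t' + t'' = t ∧ X.card * Y.card ≤ t'.choose r * t''.choose w := by
  rcases X.eq_empty_or_nonempty with hXe | ⟨x0, hx0⟩
  · exact ⟨t, 0, by omega, by simp [hXe]⟩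
  -- every x ∈ X is inl with card r
  have hXform : ∀ x ∈ X, ∃ A, x = Sum.inl A ∧ A.card = r := by
    intro x hx
    have := (hadj x hx y0 hy0)
    rw [biIntGraph, SimpleGraph.fromRel_adj] at this
    rcases this.2 with ⟨A, B, hxa, _, hAr, _, _⟩ | ⟨A, B, hya, _, _⟩
    · exact ⟨A, hxa, hAr⟩
    · rw [hy0e] at hya; exact absurd hya (by simp)
  obtain ⟨A0, hx0e, _⟩ := hXform x0 hx0
  have hYform : ∀ y ∈ Y, ∃ B, y = Sum.inr B ∧ B.card = w := by
    intro y hy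
    have := (hadj x0 hx0 y hy)
    rw [biIntGraph, SimpleGraph.fromRel_adj] at this
    rcases this.2 with ⟨A, B, _, hyb, _, hBw, _⟩ | ⟨A, B, hya, hxb, -⟩
    · exact ⟨B, hyb, hBw⟩
    · rw [hx0e] at hxb; exact absurd hxb (by simp)
  clear hx0e hx0 hy0 hy0e
  set g : Finset (Fin t) ⊕ Finset (Fin t) → Finset (Fin t) := Sum.elim id id with hg
  have cX : (X.image g).card = X.card := by
    apply card_image_of_injOn
    intro x1 h1 x2 h2 he
    obtain ⟨A1, e1, -⟩ := hXform x1 h1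
    obtain ⟨A2, e2, -⟩ := hXform x2 h2
    subst e1; subst e2; simpa [hg] using he
  have cY : (Y.image g).card = Y.card := by
    apply card_image_of_injOn
    intro y1 h1 y2 h2 he
    obtain ⟨B1, e1, -⟩ := hYform y1 h1
    obtain ⟨B2, e2, -⟩ := hYform y2 h2
    subst e1; subst e2; simpa [hg] using he
  obtain ⟨t', t'', hsum, hle⟩ := crossBound (X.image g) (Y.image g)
    (by rintro A hA
        obtain ⟨x, hx, rfl⟩ := mem_image.1 hA
        obtain ⟨A', e, hc⟩ := hXform x hx
        subst e; simpa [hg])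
    (by rintro B hB
        obtain ⟨y, hy, rfl⟩ := mem_image.1 hB
        obtain ⟨B', e, hc⟩ := hYform y hy
        subst e; simpa [hg])
    (by rintro A hA B hB
        obtain ⟨x, hx, rfl⟩ := mem_image.1 hA
        obtain ⟨y, hy, rfl⟩ := mem_image.1 hB
        obtain ⟨A', ex, -⟩ := hXform x hx
        obtain ⟨B', ey, -⟩ := hYform y hy
        subst ex; subst ey
        have := hadj _ hx _ hy
        rw [biIntGraph, SimpleGraph.fromRel_adj] at this
        rcases this.2 with ⟨A'', B'', ha, hb, -, -, hd⟩ | ⟨A'', B'', ha, hb, -⟩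
        · simp only [Sum.inl.injEq, Sum.inr.injEq] at ha hb
          subst ha; subst hb; simpa [hg] using hd
        · exact absurd hb (by simp))
  exact ⟨t', t'', hsum, by rw [← cX, ← cY]; exact hle⟩


/-- For positive integers `r, w, t` with `w ≤ r` and `t ≥ r + w`,
`B(I_t(r,w)) = max_{t'+t''=t} C(t',r)·C(t'',w)` and
`|E(I_t(r,w))| = C(t,r)·C(t−r,w)`. -/
theorem maxBicliqueEdges_and_card_edges_biIntGraph (r w t : ℕ)
    (hw : 0 < w) (hwr : w ≤ r) (ht : r + w ≤ t) :
    maxBicliqueEdges (biIntGraph t r w)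
        = sSup {m : ℕ | ∃ t' t'' : ℕ, t' + t'' = t ∧ m = t'.choose r * t''.choose w} ∧
      Nat.card (biIntGraph t r w).edgeSet = t.choose r * (t - r).choose w := by
  constructor
  · -- sSup equality
    set L := {m : ℕ | ∃ X Y : Finset (Finset (Fin t) ⊕ Finset (Fin t)),
      Disjoint X Y ∧ (∀ x ∈ X, ∀ y ∈ Y, (biIntGraph t r w).Adj x y) ∧
      m = X.card * Y.card} with hL
    set R := {m : ℕ | ∃ t' t'' : ℕ, t' + t'' = t ∧ m = t'.choose r * t''.choose w} with hR
    have hRsub : R ⊆ L := by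
      rintro m ⟨t', t'', hsum, rfl⟩
      obtain ⟨S, -, hScard⟩ := Finset.exists_subset_card_eq
        (show t' ≤ (univ : Finset (Fin t)).card by simp; omega)
      refine ⟨(S.powersetCard r).image Sum.inl, ((Sᶜ).powersetCard w).image Sum.inr,
        ?_, ?_, ?_⟩
      · rw [Finset.disjoint_left]
        rintro a ha hb
        obtain ⟨A, -, rfl⟩ := mem_image.1 ha
        obtain ⟨B, -, hBe⟩ := mem_image.1 hb
        exact absurd hBe (by simp)
      · rintro x hx y hy
        obtain ⟨A, hA, rfl⟩ := mem_image.1 hx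
        obtain ⟨B, hB, rfl⟩ := mem_image.1 hy
        rw [mem_powersetCard] at hA hB
        rw [biIntGraph, SimpleGraph.fromRel_adj]
        refine ⟨by simp, Or.inl ⟨A, B, rfl, rfl, hA.2, hB.2, ?_⟩⟩
        exact Finset.disjoint_left.2 fun i hiA hiB =>
          (Finset.mem_compl.1 (hB.1 hiB)) (hA.1 hiA)
      · rw [card_image_of_injective _ Sum.inl_injective,
          card_image_of_injective _ Sum.inr_injective,
          card_powersetCard, card_powersetCard, hScard, card_compl,
          Fintype.card_fin]
        congr 2
        omega
    have hRne : R.Nonempty := ⟨t.choose r * (0 : ℕ).choose w, t, 0, by omega, rfl⟩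
    have hRub : ∀ m' ∈ R, m' ≤ t.choose r * t.choose w := by
      rintro m ⟨t', t'', hsum, rfl⟩
      exact Nat.mul_le_mul (Nat.choose_le_choose r (by omega))
        (Nat.choose_le_choose w (by omega))
    have hRbdd : BddAbove R := ⟨_, hRub⟩
    have hLle : ∀ m ∈ L, ∃ m' ∈ R, m ≤ m' := by
      rintro m ⟨X, Y, hdisj, hadj, rfl⟩
      rcases Y.eq_empty_or_nonempty with hYe | ⟨y0, hy0⟩
      · exact ⟨t.choose r * (0:ℕ).choose w, ⟨t, 0, by omega, rfl⟩, by simp [hYe]⟩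
      rcases X.eq_empty_or_nonempty with hXe | ⟨x0, hx0⟩
      · exact ⟨t.choose r * (0:ℕ).choose w, ⟨t, 0, by omega, rfl⟩, by simp [hXe]⟩
      rcases y0 with C0 | C0
      · -- y0 = inl C0 : swapped case
        have := (hadj x0 hx0 _ hy0)
        rw [biIntGraph, SimpleGraph.fromRel_adj] at this
        rcases this.2 with ⟨A, B, -, hb, -⟩ | ⟨A, B, -, hb, -⟩
        · exact absurd hb (by simp)
        · obtain ⟨t', t'', hsum, hle⟩ := inlSide Y X
            (fun y hy x hx => (hadj x hx y hy).symm) x0 hx0 B hb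
          exact ⟨t'.choose r * t''.choose w, ⟨t', t'', hsum, rfl⟩,
            by rw [mul_comm]; exact hle⟩
      · obtain ⟨t', t'', hsum, hle⟩ := inlSide X Y hadj _ hy0 C0 rfl
        exact ⟨t'.choose r * t''.choose w, ⟨t', t'', hsum, rfl⟩, hle⟩
    have hLbdd : BddAbove L := ⟨t.choose r * t.choose w, fun m hm => by
      obtain ⟨m', hm', hle⟩ := hLle m hm
      exact hle.trans (hRub m' hm')⟩
    have hLne : L.Nonempty := ⟨0, ∅, ∅, by simp, by simp, by simp⟩
    apply le_antisymm
    · apply csSup_le hLne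
      intro m hm
      obtain ⟨m', hm', hle⟩ := hLle m hm
      exact hle.trans (le_csSup hRbdd hm')
    · exact csSup_le_csSup hLbdd hRne hRsub
  · classical
    set f : Finset (Fin t) × Finset (Fin t) → Sym2 (Finset (Fin t) ⊕ Finset (Fin t)) :=
      fun p => s(Sum.inl p.1, Sum.inr p.2) with hf
    set P : Finset (Finset (Fin t) × Finset (Fin t)) :=
      (Finset.univ.powersetCard r).biUnion
        (fun A => ((Aᶜ).powersetCard w).image (fun B => (A, B))) with hP
    have hmemP : ∀ p : Finset (Fin t) × Finset (Fin t),
        p ∈ P ↔ p.1.card = r ∧ p.2.card = w ∧ Disjoint p.1 p.2 := by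
      rintro ⟨A, B⟩
      simp only [hP, mem_biUnion, Finset.mem_image, mem_powersetCard, Prod.mk.injEq]
      constructor
      · rintro ⟨A', ⟨-, hA'⟩, B', ⟨hB'sub, hB'⟩, rfl, rfl⟩
        exact ⟨hA', hB', le_compl_iff_disjoint_left.1 hB'sub⟩
      · rintro ⟨hA, hB, hd⟩
        exact ⟨A, ⟨subset_univ _, hA⟩, B, ⟨le_compl_iff_disjoint_left.2 hd, hB⟩, rfl, rfl⟩
    have hinj : Function.Injective f := by
      rintro ⟨A, B⟩ ⟨A', B'⟩ he
      simp only [hf, Sym2.eq_iff] at he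
      rcases he with ⟨h1, h2⟩ | ⟨h1, h2⟩
      · simp_all
      · exact absurd h1 (by simp)
    have hE : (biIntGraph t r w).edgeSet = ↑(P.image f) := by
      ext e
      induction e using Sym2.ind with
      | _ x y =>
        simp only [SimpleGraph.mem_edgeSet, Finset.coe_image, Set.mem_image, mem_coe]
        rw [biIntGraph, SimpleGraph.fromRel_adj]
        constructor
        · rintro ⟨hne, ⟨A, B, rfl, rfl, hA, hB, hd⟩ | ⟨A, B, rfl, rfl, hA, hB, hd⟩⟩
          · exact ⟨(A, B), (hmemP _).2 ⟨hA, hB, hd⟩, rfl⟩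
          · exact ⟨(A, B), (hmemP _).2 ⟨hA, hB, hd⟩, Sym2.eq_swap⟩
        · rintro ⟨⟨A, B⟩, hp, he⟩
          obtain ⟨hA, hB, hd⟩ := (hmemP _).1 hp
          simp only [hf, Sym2.eq_iff] at he
          rcases he with ⟨hx, hy⟩ | ⟨hy, hx⟩
          · subst hx; subst hy
            exact ⟨by simp, Or.inl ⟨A, B, rfl, rfl, hA, hB, hd⟩⟩
          · subst hx; subst hy
            exact ⟨by simp, Or.inr ⟨A, B, rfl, rfl, hA, hB, hd⟩⟩
    rw [hE, Nat.card_coe_set_eq, Set.ncard_coe_finset,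
      card_image_of_injective _ hinj, hP]
    have hdisj' : ∀ A ∈ (Finset.univ : Finset (Fin t)).powersetCard r,
        ∀ A' ∈ (Finset.univ : Finset (Fin t)).powersetCard r,
        A ≠ A' → Disjoint (((Aᶜ).powersetCard w).image (fun B => (A, B)))
          (((A'ᶜ).powersetCard w).image (fun B => (A', B))) := by
      rintro A hA A' hA' hne
      rw [Finset.disjoint_left]
      rintro p hp hp'
      obtain ⟨B, -, rfl⟩ := Finset.mem_image.1 hp
      obtain ⟨B', -, he⟩ := Finset.mem_image.1 hp'
      have hAA : A' = A := congrArg Prod.fst he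
      exact hne hAA.symm
    rw [card_biUnion hdisj']
    have hsum : ∀ A ∈ (Finset.univ : Finset (Fin t)).powersetCard r,
        (((Aᶜ).powersetCard w).image (fun B => (A, B))).card = (t - r).choose w := by
      intro A hA
      rw [mem_powersetCard] at hA
      rw [card_image_of_injective _ (Prod.mk_right_injective A),
        card_powersetCard, card_compl, Fintype.card_fin, hA.2]
    rw [Finset.sum_congr rfl hsum, Finset.sum_const, card_powersetCard,
      Finset.card_univ, Fintype.card_fin, smul_eq_mul]
end

section
/- For all positive integers r, w, t with w ≤ r and t ≥ r + w, the fractional biclique covering number of the bi-intersection graph satisfies bc*(I_t(r,w)) = min_{w ≤ m ≤ t−r} C(t,m) / C(t−r−w, m−w), where C(·,·) denotes the binomial coefficient and the minimum is over integers m. -/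
/-- `fracBC G` = `bc*(G)`, the fractional biclique covering number of a finite graph
`G`: the infimum of `Σ φ` over all `[0,1]`-valued weightings `φ` of pairs of vertex
sets, supported on bicliques of `G`, such that every edge of `G` receives total
weight at least 1 from the bicliques containing it. -/
noncomputable def fracBC {V : Type*} [Fintype V] [DecidableEq V] (G : SimpleGraph V) : ℝ :=
  sInf {s : ℝ | ∃ φ : Finset V × Finset V → ℝ,
    (∀ p, 0 ≤ φ p ∧ φ p ≤ 1) ∧
    (∀ p, ¬(Disjoint p.1 p.2 ∧ ∀ x ∈ p.1, ∀ y ∈ p.2, G.Adj x y) → φ p = 0) ∧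
    (∀ x y, G.Adj x y → 1 ≤ ∑ p : Finset V × Finset V,
      (if (x ∈ p.1 ∧ y ∈ p.2) ∨ (y ∈ p.1 ∧ x ∈ p.2) then φ p else 0)) ∧
    s = ∑ p : Finset V × Finset V, φ p}


open Finset Sum

lemma adj_inl_inr {t r w : ℕ} {A B : Finset (Fin t)} :
    (biIntGraph t r w).Adj (inl A) (inr B) ↔ A.card = r ∧ B.card = w ∧ Disjoint A B := by
  simp [biIntGraph, SimpleGraph.fromRel_adj]

lemma not_adj_inl_inl {t r w : ℕ} {A B : Finset (Fin t)} :
    ¬ (biIntGraph t r w).Adj (inl A) (inl B) := by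
  simp [biIntGraph, SimpleGraph.fromRel_adj]

lemma not_adj_inr_inr {t r w : ℕ} {A B : Finset (Fin t)} :
    ¬ (biIntGraph t r w).Adj (inr A) (inr B) := by
  simp [biIntGraph, SimpleGraph.fromRel_adj]

lemma choose_sub_comm {n a b : ℕ} (h : a + b ≤ n) :
    n.choose a * (n - a).choose b = n.choose b * (n - b).choose a := by
  have h1 := Nat.choose_mul (n := n) (k := a + b) (s := a) (Nat.le_add_right _ _)
  have h2 := Nat.choose_mul (n := n) (k := a + b) (s := b) (Nat.le_add_left _ _)
  have e1 : a + b - a = b := by omega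
  have e2 : a + b - b = a := by omega
  have e3 : (a + b).choose a = (a + b).choose b := by
    have h4 := Nat.choose_symm (Nat.le_add_left b a)
    rwa [show a + b - b = a by omega] at h4
  rw [e1] at h1; rw [e2] at h2
  rw [← h1, e3, h2]

lemma key_id {t r w m : ℕ} (hwr : w ≤ r) (ht : r + w ≤ t) (hm1 : w ≤ m) (hm2 : m ≤ t - r) :
    t.choose m * (m.choose w * (t - m).choose r)
      = (t.choose r * (t - r).choose w) * (t - r - w).choose (m - w) := by
  have s1 : t.choose m * m.choose w = t.choose w * (t - w).choose (m - w) :=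
    Nat.choose_mul hm1
  have s2 : (t - w).choose (m - w) * ((t - w) - (m - w)).choose r
      = (t - w).choose r * ((t - w) - r).choose (m - w) := choose_sub_comm (by omega)
  rw [show (t - w) - (m - w) = t - m by omega, show (t - w) - r = t - r - w by omega] at s2
  have s3 : t.choose r * (t - r).choose w = t.choose w * (t - w).choose r :=
    choose_sub_comm ht
  calc t.choose m * (m.choose w * (t - m).choose r)
      = (t.choose m * m.choose w) * (t - m).choose r := by ring
    _ = t.choose w * ((t - w).choose (m - w) * (t - m).choose r) := by rw [s1]; ring
    _ = t.choose w * ((t - w).choose r * (t - r - w).choose (m - w)) := by rw [s2]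
    _ = (t.choose r * (t - r).choose w) * (t - r - w).choose (m - w) := by rw [s3]; ring

/-- number of m-sets M with B ⊆ M and A ⊆ Mᶜ -/
lemma count_between {t r w m : ℕ} (ht : r + w ≤ t) (hm1 : w ≤ m) (hm2 : m ≤ t - r)
    (A B : Finset (Fin t)) (hA : A.card = r) (hB : B.card = w) (hAB : Disjoint A B) :
    (((univ : Finset (Fin t)).powersetCard m).filter (fun M => B ⊆ M ∧ A ⊆ Mᶜ)).card
      = (t - r - w).choose (m - w) := by
  have hBA : B ⊆ Aᶜ := le_compl_iff_disjoint_left.mpr hAB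
  have hcard : (Aᶜ \ B).card = t - r - w := by
    rw [card_sdiff_of_subset hBA, card_compl, hA, hB, Fintype.card_fin]
  rw [← hcard, ← Finset.card_powersetCard]
  apply Finset.card_nbij' (fun M => M \ B) (fun N => N ∪ B)
  · intro M hM
    simp only [Finset.mem_coe, mem_filter, Finset.mem_powersetCard] at hM
    obtain ⟨⟨_, hMm⟩, hBM, hAM⟩ := hM
    have hMA : M ⊆ Aᶜ := le_compl_iff_disjoint_left.mpr
      ((le_compl_iff_disjoint_left.mp hAM).symm)
    rw [Finset.mem_coe, Finset.mem_powersetCard]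
    constructor
    · exact sdiff_subset_sdiff hMA le_rfl
    · rw [card_sdiff_of_subset hBM, hMm, hB]
  · intro N hN
    rw [Finset.mem_coe, Finset.mem_powersetCard] at hN
    obtain ⟨hNs, hNc⟩ := hN
    have hNA : N ⊆ Aᶜ := hNs.trans sdiff_subset
    have hNB : Disjoint N B := Finset.sdiff_disjoint.mono_left hNs
    simp only [Finset.mem_coe, mem_filter, Finset.mem_powersetCard]
    refine ⟨⟨subset_univ _, ?_⟩, subset_union_right, ?_⟩
    · rw [Finset.card_union_of_disjoint hNB, hNc, hB]; omega
    · exact le_compl_iff_disjoint_left.mpr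
        ((le_compl_iff_disjoint_left.mp (union_subset hNA hBA)).symm)
  · intro M hM
    simp only [Finset.mem_coe, mem_filter] at hM
    exact Finset.sdiff_union_of_subset hM.2.1
  · intro N hN
    rw [Finset.mem_coe, Finset.mem_powersetCard] at hN
    have hNB : Disjoint N B := Finset.sdiff_disjoint.mono_left hN.1
    exact Finset.union_sdiff_cancel_right hNB

def Kmax (t r w : ℕ) : ℕ := (range (t + 1)).sup fun m => m.choose w * (t - m).choose r

lemma Kmax_spec {t r w : ℕ} (hwr : w ≤ r) (ht : r + w ≤ t) :
    ∃ m₀, w ≤ m₀ ∧ m₀ ≤ t - r ∧ Kmax t r w = m₀.choose w * (t - m₀).choose r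
      ∧ 1 ≤ Kmax t r w := by
  have h1 : 1 ≤ Kmax t r w := by
    have hmem : w ∈ range (t + 1) := by simp; omega
    have h2 : w.choose w * (t - w).choose r ≤ Kmax t r w :=
      Finset.le_sup (f := fun m => m.choose w * (t - m).choose r) hmem
    have hpos : 1 ≤ w.choose w * (t - w).choose r :=
      Nat.mul_pos (Nat.choose_pos le_rfl) (Nat.choose_pos (by omega))
    exact hpos.trans h2
  obtain ⟨m₀, hm₀, he⟩ := Finset.exists_mem_eq_sup (range (t + 1)) ⟨0, by simp⟩
    (fun m => m.choose w * (t - m).choose r)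
  simp only [Finset.mem_range] at hm₀
  have he' : Kmax t r w = m₀.choose w * (t - m₀).choose r := he
  refine ⟨m₀, ?_, ?_, he', h1⟩
  · by_contra hc
    rw [he', Nat.choose_eq_zero_of_lt (by omega), zero_mul] at h1; omega
  · by_contra hc
    rw [he', show (t - m₀).choose r = 0 from Nat.choose_eq_zero_of_lt (by omega),
      mul_zero] at h1; omega

lemma Kmax_le {t r w : ℕ} (m : ℕ) (hm : m ≤ t) :
    m.choose w * (t - m).choose r ≤ Kmax t r w :=
  Finset.le_sup (f := fun m => m.choose w * (t - m).choose r) (by simp; omega)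

def eSet (t r w : ℕ) : Finset (Finset (Fin t) × Finset (Fin t)) :=
  (((univ : Finset (Fin t)).powersetCard r) ×ˢ ((univ : Finset (Fin t)).powersetCard w)).filter
    fun e => Disjoint e.1 e.2

lemma mem_eSet {t r w : ℕ} {e : Finset (Fin t) × Finset (Fin t)} :
    e ∈ eSet t r w ↔ e.1.card = r ∧ e.2.card = w ∧ Disjoint e.1 e.2 := by
  simp [eSet, Finset.mem_powersetCard_univ, and_assoc]

lemma eSet_card {t r w : ℕ} (ht : r + w ≤ t) :
    (eSet t r w).card = t.choose r * (t - r).choose w := by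
  rw [Finset.card_eq_sum_card_fiberwise
    (f := Prod.fst) (t := (univ : Finset (Fin t)).powersetCard r)
    (fun e he => by rw [Finset.mem_coe, Finset.mem_powersetCard_univ]; exact (mem_eSet.mp he).1)]
  have hfib : ∀ A ∈ (univ : Finset (Fin t)).powersetCard r,
      ((eSet t r w).filter fun e => e.1 = A).card = (t - r).choose w := by
    intro A hA
    rw [Finset.mem_powersetCard_univ] at hA
    have : (Aᶜ.powersetCard w).card = (t - r).choose w := by
      rw [Finset.card_powersetCard, card_compl, hA, Fintype.card_fin]
    rw [← this]
    apply Finset.card_nbij' (fun e => e.2) (fun B => (A, B))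
    · intro e he
      simp only [Finset.mem_coe, mem_filter, mem_eSet] at he
      rw [Finset.mem_coe, Finset.mem_powersetCard]
      refine ⟨le_compl_iff_disjoint_left.mpr ?_, he.1.2.1⟩
      rw [← he.2]; exact he.1.2.2
    · intro B hB
      rw [Finset.mem_coe, Finset.mem_powersetCard] at hB
      simp only [Finset.mem_coe, mem_filter, mem_eSet]
      exact ⟨⟨hA, hB.2, le_compl_iff_disjoint_left.mp hB.1⟩, trivial⟩
    · intro e he
      simp only [Finset.mem_coe, mem_filter] at he
      rw [← he.2]
    · intro B hB; rfl
  rw [Finset.sum_congr rfl hfib, Finset.sum_const, Finset.card_powersetCard,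
    card_univ, Fintype.card_fin, smul_eq_mul]

lemma count1_le {t r w : ℕ}
    (p : Finset (Finset (Fin t) ⊕ Finset (Fin t)) × Finset (Finset (Fin t) ⊕ Finset (Fin t)))
    (hp : ∀ x ∈ p.1, ∀ y ∈ p.2, (biIntGraph t r w).Adj x y) :
    ((eSet t r w).filter fun e => inl e.1 ∈ p.1 ∧ inr e.2 ∈ p.2).card ≤ Kmax t r w := by
  rcases Finset.eq_empty_or_nonempty
    ((eSet t r w).filter fun e => inl e.1 ∈ p.1 ∧ inr e.2 ∈ p.2) with hemp | ⟨e₀, he₀⟩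
  · rw [hemp]; simp
  · simp only [mem_filter] at he₀
    obtain ⟨-, hA₀, hB₀⟩ := he₀
    set 𝒜 := (univ : Finset (Finset (Fin t))).filter (fun A => inl A ∈ p.1) with h𝒜def
    set ℬ := (univ : Finset (Finset (Fin t))).filter (fun B => inr B ∈ p.2) with hℬdef
    set S := ℬ.sup id with hSdef
    have hScard : S.card ≤ t := by
      have := Finset.card_le_univ S
      rwa [Fintype.card_fin] at this
    have h𝒜sub : 𝒜 ⊆ Sᶜ.powersetCard r := by
      intro A hA
      rw [h𝒜def, mem_filter] at hA
      have hadjs : ∀ B ∈ ℬ, Disjoint A B := by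
        intro B hB
        rw [hℬdef, mem_filter] at hB
        exact (adj_inl_inr.mp (hp _ hA.2 _ hB.2)).2.2
      have hDS : Disjoint A S := by
        rw [hSdef, Finset.disjoint_sup_right]
        intro B hB; exact hadjs B hB
      rw [Finset.mem_powersetCard]
      exact ⟨le_compl_iff_disjoint_left.mpr hDS.symm,
        (adj_inl_inr.mp (hp _ hA.2 _ hB₀)).1⟩
    have hℬsub : ℬ ⊆ S.powersetCard w := by
      intro B hB
      have hBs : B ⊆ S := Finset.le_sup (f := id) hB
      rw [hℬdef, mem_filter] at hB
      rw [Finset.mem_powersetCard]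
      exact ⟨hBs, (adj_inl_inr.mp (hp _ hA₀ _ hB.2)).2.1⟩
    have hsub : ((eSet t r w).filter fun e => inl e.1 ∈ p.1 ∧ inr e.2 ∈ p.2) ⊆ 𝒜 ×ˢ ℬ := by
      intro e he
      simp only [mem_filter] at he
      rw [Finset.mem_product, h𝒜def, hℬdef, mem_filter, mem_filter]
      exact ⟨⟨mem_univ _, he.2.1⟩, ⟨mem_univ _, he.2.2⟩⟩
    calc ((eSet t r w).filter fun e => inl e.1 ∈ p.1 ∧ inr e.2 ∈ p.2).card
        ≤ (𝒜 ×ˢ ℬ).card := Finset.card_le_card hsub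
      _ = 𝒜.card * ℬ.card := Finset.card_product _ _
      _ ≤ (Sᶜ.powersetCard r).card * (S.powersetCard w).card :=
          Nat.mul_le_mul (Finset.card_le_card h𝒜sub) (Finset.card_le_card hℬsub)
      _ = (t - S.card).choose r * (S.card).choose w := by
          rw [Finset.card_powersetCard, Finset.card_powersetCard, card_compl,
            Fintype.card_fin]
      _ = (S.card).choose w * (t - S.card).choose r := mul_comm _ _
      _ ≤ Kmax t r w := Kmax_le S.card hScard

lemma count_le {t r w : ℕ}
    (p : Finset (Finset (Fin t) ⊕ Finset (Fin t)) × Finset (Finset (Fin t) ⊕ Finset (Fin t)))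
    (hp : ∀ x ∈ p.1, ∀ y ∈ p.2, (biIntGraph t r w).Adj x y) :
    ((eSet t r w).filter fun e =>
      (inl e.1 ∈ p.1 ∧ inr e.2 ∈ p.2) ∨ (inr e.2 ∈ p.1 ∧ inl e.1 ∈ p.2)).card
      ≤ Kmax t r w := by
  have hp' : ∀ x ∈ p.2, ∀ y ∈ p.1, (biIntGraph t r w).Adj x y :=
    fun x hx y hy => (hp y hy x hx).symm
  have hF2 : ((eSet t r w).filter fun e => inr e.2 ∈ p.1 ∧ inl e.1 ∈ p.2).card ≤ Kmax t r w := by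
    have h := count1_le (p.2, p.1) hp'
    rw [Finset.filter_congr (fun e _ => (and_comm : (inr e.2 ∈ p.1 ∧ inl e.1 ∈ p.2) ↔ _))]
    exact h
  rw [Finset.filter_or]
  rcases Finset.eq_empty_or_nonempty
      ((eSet t r w).filter fun e => inl e.1 ∈ p.1 ∧ inr e.2 ∈ p.2) with h1 | ⟨e1, he1⟩
  · rw [h1, Finset.empty_union]; exact hF2
  rcases Finset.eq_empty_or_nonempty
      ((eSet t r w).filter fun e => inr e.2 ∈ p.1 ∧ inl e.1 ∈ p.2) with h2 | ⟨e2, he2⟩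
  · rw [h2, Finset.union_empty]; exact count1_le p hp
  exfalso
  simp only [mem_filter] at he1 he2
  exact not_adj_inl_inl (hp _ he1.2.1 _ he2.2.2)

lemma sup_powersetCard {α : Type*} [DecidableEq α] {w : ℕ} (hw : 0 < w) {M : Finset α}
    (hM : w ≤ M.card) : (M.powersetCard w).sup id = M := by
  apply le_antisymm
  · exact Finset.sup_le fun S hS => (Finset.mem_powersetCard.mp hS).1
  · intro x hx
    obtain ⟨S, hS, hScard⟩ := Finset.exists_subset_card_eq
      (show w - 1 ≤ (M.erase x).card by rw [Finset.card_erase_of_mem hx]; omega)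
    have hxS : x ∉ S := fun h => (Finset.mem_erase.mp (hS h)).1 rfl
    have hmem : insert x S ∈ M.powersetCard w := by
      rw [Finset.mem_powersetCard]
      refine ⟨Finset.insert_subset hx (hS.trans (Finset.erase_subset _ _)), ?_⟩
      rw [Finset.card_insert_of_notMem hxS, hScard]; omega
    exact (Finset.le_sup (f := id) hmem) (Finset.mem_insert_self x S)

lemma ub_mem {t r w : ℕ} (hw : 0 < w) (hwr : w ≤ r) (ht : r + w ≤ t) {m : ℕ}
    (hm1 : w ≤ m) (hm2 : m ≤ t - r) :
    ∃ φ : Finset (Finset (Fin t) ⊕ Finset (Fin t)) × Finset (Finset (Fin t) ⊕ Finset (Fin t)) → ℝ,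
    (∀ p, 0 ≤ φ p ∧ φ p ≤ 1) ∧
    (∀ p, ¬(Disjoint p.1 p.2 ∧ ∀ x ∈ p.1, ∀ y ∈ p.2, (biIntGraph t r w).Adj x y) → φ p = 0) ∧
    (∀ x y, (biIntGraph t r w).Adj x y → 1 ≤ ∑ p : Finset (Finset (Fin t) ⊕ Finset (Fin t)) ×
        Finset (Finset (Fin t) ⊕ Finset (Fin t)),
      (if (x ∈ p.1 ∧ y ∈ p.2) ∨ (y ∈ p.1 ∧ x ∈ p.2) then φ p else 0)) ∧
    (t.choose m : ℝ) / ((t - r - w).choose (m - w) : ℝ) = ∑ p : Finset (Finset (Fin t) ⊕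
        Finset (Fin t)) × Finset (Finset (Fin t) ⊕ Finset (Fin t)), φ p := by
  classical
  set c := (t - r - w).choose (m - w) with hcdef
  have hc : 0 < c := Nat.choose_pos (by omega)
  have hcR : (0 : ℝ) < (c : ℝ) := by exact_mod_cast hc
  set bic := fun M : Finset (Fin t) =>
    ((Mᶜ.powersetCard r).image (inl : Finset (Fin t) → Finset (Fin t) ⊕ Finset (Fin t)),
     (M.powersetCard w).image (inr : Finset (Fin t) → Finset (Fin t) ⊕ Finset (Fin t)))
    with hbicdef
  set φ : Finset (Finset (Fin t) ⊕ Finset (Fin t)) × Finset (Finset (Fin t) ⊕ Finset (Fin t)) → ℝ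
    := fun p => if ∃ M : Finset (Fin t), M.card = m ∧ p = bic M then (1 : ℝ)/c else 0 with hφdef
  have hbic_inj : ∀ M ∈ (univ : Finset (Fin t)).powersetCard m,
      ∀ M' ∈ (univ : Finset (Fin t)).powersetCard m, bic M = bic M' → M = M' := by
    intro M hM M' hM' h
    rw [Finset.mem_powersetCard_univ] at hM hM'
    have h2 := congrArg Prod.snd h
    simp only [hbicdef] at h2
    have h3 : M.powersetCard w = M'.powersetCard w :=
      Finset.image_injective Sum.inr_injective h2
    have h4 : (M.powersetCard w).sup id = (M'.powersetCard w).sup id := by rw [h3]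
    rwa [sup_powersetCard hw (show w ≤ M.card by omega),
      sup_powersetCard hw (show w ≤ M'.card by omega)] at h4
  have hφ_zero : ∀ p, p ∉ ((univ : Finset (Fin t)).powersetCard m).image bic → φ p = 0 := by
    intro p hp
    rw [hφdef]
    refine if_neg fun ⟨M, hMc, hpM⟩ => hp ?_
    exact Finset.mem_image.mpr ⟨M, Finset.mem_powersetCard_univ.mpr hMc, hpM.symm⟩
  have hφ_val : ∀ M : Finset (Fin t), M.card = m → φ (bic M) = 1/c := by
    intro M hMc
    rw [hφdef]
    exact if_pos ⟨M, hMc, rfl⟩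
  refine ⟨φ, ?_, ?_, ?_, ?_⟩
  · intro p
    by_cases h : ∃ M : Finset (Fin t), M.card = m ∧ p = bic M
    · have hval : φ p = 1/c := if_pos h
      rw [hval]
      constructor
      · positivity
      · rw [div_le_one hcR]; exact_mod_cast hc
    · have hval : φ p = 0 := if_neg h
      rw [hval]; exact ⟨le_rfl, zero_le_one⟩
  · intro p hp
    rw [hφdef]
    refine if_neg fun ⟨M, hMc, hpM⟩ => hp ?_
    subst hpM
    constructor
    · rw [Finset.disjoint_left]
      intro a ha hb
      simp only [hbicdef, Finset.mem_image] at ha hb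
      obtain ⟨A, -, hA⟩ := ha
      obtain ⟨B, -, hB⟩ := hb
      rw [← hA] at hB; exact absurd hB (by simp)
    · intro x hx y hy
      simp only [hbicdef, Finset.mem_image] at hx hy
      obtain ⟨A, hA, rfl⟩ := hx
      obtain ⟨B, hB, rfl⟩ := hy
      rw [Finset.mem_powersetCard] at hA hB
      exact adj_inl_inr.mpr ⟨hA.2, hB.2, disjoint_compl_left.mono hA.1 hB.1⟩
  · have key : ∀ A B : Finset (Fin t), A.card = r → B.card = w → Disjoint A B →
        (1 : ℝ) ≤ ∑ p : Finset (Finset (Fin t) ⊕ Finset (Fin t)) ×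
          Finset (Finset (Fin t) ⊕ Finset (Fin t)),
          (if (inl A ∈ p.1 ∧ inr B ∈ p.2) ∨ (inr B ∈ p.1 ∧ inl A ∈ p.2) then φ p else 0) := by
      intro A B hA hB hAB
      have step1 : ∑ p : Finset (Finset (Fin t) ⊕ Finset (Fin t)) ×
            Finset (Finset (Fin t) ⊕ Finset (Fin t)),
            (if (inl A ∈ p.1 ∧ inr B ∈ p.2) ∨ (inr B ∈ p.1 ∧ inl A ∈ p.2) then φ p else 0)
          = ∑ p ∈ ((univ : Finset (Fin t)).powersetCard m).image bic,
            (if (inl A ∈ p.1 ∧ inr B ∈ p.2) ∨ (inr B ∈ p.1 ∧ inl A ∈ p.2) then φ p else 0) := by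
        refine (Finset.sum_subset (Finset.subset_univ _) fun p _ hp => ?_).symm
        rw [hφ_zero p hp]; simp
      have step2 : ∑ p ∈ ((univ : Finset (Fin t)).powersetCard m).image bic,
            (if (inl A ∈ p.1 ∧ inr B ∈ p.2) ∨ (inr B ∈ p.1 ∧ inl A ∈ p.2) then φ p else 0)
          = ∑ M ∈ (univ : Finset (Fin t)).powersetCard m,
            (if B ⊆ M ∧ A ⊆ Mᶜ then (1 : ℝ)/c else 0) := by
        rw [Finset.sum_image hbic_inj]
        refine Finset.sum_congr rfl fun M hM => ?_
        rw [Finset.mem_powersetCard_univ] at hM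
        rw [hφ_val M hM]
        refine if_congr ?_ rfl rfl
        simp only [hbicdef, Finset.mem_image, Finset.mem_powersetCard]
        constructor
        · rintro (⟨⟨A', hA', hAA⟩, ⟨B', hB', hBB⟩⟩ | ⟨⟨B', hB', hBB⟩, -⟩)
          · rw [Sum.inl.injEq] at hAA; rw [Sum.inr.injEq] at hBB
            subst hAA; subst hBB
            exact ⟨hB'.1, hA'.1⟩
          · exact absurd hBB (by simp)
        · rintro ⟨hBM, hAM⟩
          exact Or.inl ⟨⟨A, ⟨hAM, hA⟩, rfl⟩, ⟨B, ⟨hBM, hB⟩, rfl⟩⟩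
      rw [step1, step2, ← Finset.sum_filter, Finset.sum_const,
        count_between ht hm1 hm2 A B hA hB hAB, ← hcdef, nsmul_eq_mul, mul_one_div,
        div_self (ne_of_gt hcR)]
    intro x y hadj
    match x, y with
    | inl A, inl A' => exact absurd hadj not_adj_inl_inl
    | inr B, inr B' => exact absurd hadj not_adj_inr_inr
    | inl A, inr B =>
      obtain ⟨hA, hB, hAB⟩ := adj_inl_inr.mp hadj
      exact key A B hA hB hAB
    | inr B, inl A =>
      obtain ⟨hA, hB, hAB⟩ := adj_inl_inr.mp hadj.symm
      have h := key A B hA hB hAB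
      refine h.trans (le_of_eq (Finset.sum_congr rfl fun p _ => ?_))
      exact if_congr or_comm rfl rfl
  · have step1 : ∑ p : Finset (Finset (Fin t) ⊕ Finset (Fin t)) ×
          Finset (Finset (Fin t) ⊕ Finset (Fin t)), φ p
        = ∑ p ∈ ((univ : Finset (Fin t)).powersetCard m).image bic, φ p :=
      (Finset.sum_subset (Finset.subset_univ _) fun p _ hp => hφ_zero p hp).symm
    rw [step1, Finset.sum_image hbic_inj]
    have : ∀ M ∈ (univ : Finset (Fin t)).powersetCard m, φ (bic M) = 1/c :=
      fun M hM => hφ_val M (Finset.mem_powersetCard_univ.mp hM)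
    rw [Finset.sum_congr rfl this, Finset.sum_const, Finset.card_powersetCard,
      card_univ, Fintype.card_fin, nsmul_eq_mul, mul_one_div, hcdef]

lemma lb {t r w : ℕ} (ht : r + w ≤ t)
    (φ : Finset (Finset (Fin t) ⊕ Finset (Fin t)) × Finset (Finset (Fin t) ⊕ Finset (Fin t)) → ℝ)
    (h01 : ∀ p, 0 ≤ φ p ∧ φ p ≤ 1)
    (hsupp : ∀ p, ¬(Disjoint p.1 p.2 ∧ ∀ x ∈ p.1, ∀ y ∈ p.2, (biIntGraph t r w).Adj x y)
      → φ p = 0)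
    (hcov : ∀ x y, (biIntGraph t r w).Adj x y → 1 ≤ ∑ p : Finset (Finset (Fin t) ⊕
        Finset (Fin t)) × Finset (Finset (Fin t) ⊕ Finset (Fin t)),
      (if (x ∈ p.1 ∧ y ∈ p.2) ∨ (y ∈ p.1 ∧ x ∈ p.2) then φ p else 0)) :
    ((t.choose r * (t - r).choose w : ℕ) : ℝ)
      ≤ (Kmax t r w : ℝ) * ∑ p : Finset (Finset (Fin t) ⊕ Finset (Fin t)) ×
          Finset (Finset (Fin t) ⊕ Finset (Fin t)), φ p := by
  classical
  have hedge : ∀ e ∈ eSet t r w, (1 : ℝ) ≤ ∑ p : Finset (Finset (Fin t) ⊕ Finset (Fin t)) ×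
      Finset (Finset (Fin t) ⊕ Finset (Fin t)),
      (if (inl e.1 ∈ p.1 ∧ inr e.2 ∈ p.2) ∨ (inr e.2 ∈ p.1 ∧ inl e.1 ∈ p.2) then φ p else 0) :=
    fun e he => hcov _ _ (adj_inl_inr.mpr (mem_eSet.mp he))
  calc ((t.choose r * (t - r).choose w : ℕ) : ℝ)
      = ∑ _e ∈ eSet t r w, (1 : ℝ) := by
        rw [Finset.sum_const, eSet_card ht]; simp
    _ ≤ ∑ e ∈ eSet t r w, ∑ p : Finset (Finset (Fin t) ⊕ Finset (Fin t)) ×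
          Finset (Finset (Fin t) ⊕ Finset (Fin t)),
          (if (inl e.1 ∈ p.1 ∧ inr e.2 ∈ p.2) ∨ (inr e.2 ∈ p.1 ∧ inl e.1 ∈ p.2) then φ p
            else 0) := Finset.sum_le_sum hedge
    _ = ∑ p : Finset (Finset (Fin t) ⊕ Finset (Fin t)) ×
          Finset (Finset (Fin t) ⊕ Finset (Fin t)), ∑ e ∈ eSet t r w,
          (if (inl e.1 ∈ p.1 ∧ inr e.2 ∈ p.2) ∨ (inr e.2 ∈ p.1 ∧ inl e.1 ∈ p.2) then φ p
            else 0) := Finset.sum_comm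
    _ = ∑ p : Finset (Finset (Fin t) ⊕ Finset (Fin t)) ×
          Finset (Finset (Fin t) ⊕ Finset (Fin t)),
          (((eSet t r w).filter fun e =>
            (inl e.1 ∈ p.1 ∧ inr e.2 ∈ p.2) ∨ (inr e.2 ∈ p.1 ∧ inl e.1 ∈ p.2)).card : ℝ)
            * φ p := by
        refine Finset.sum_congr rfl fun p _ => ?_
        rw [← Finset.sum_filter, Finset.sum_const, nsmul_eq_mul]
    _ ≤ ∑ p : Finset (Finset (Fin t) ⊕ Finset (Fin t)) ×
          Finset (Finset (Fin t) ⊕ Finset (Fin t)), (Kmax t r w : ℝ) * φ p := by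
        refine Finset.sum_le_sum fun p _ => ?_
        rcases eq_or_ne (φ p) 0 with h | h
        · rw [h, mul_zero, mul_zero]
        · have hb : Disjoint p.1 p.2 ∧ ∀ x ∈ p.1, ∀ y ∈ p.2, (biIntGraph t r w).Adj x y := by
            by_contra hc; exact h (hsupp p hc)
          exact mul_le_mul_of_nonneg_right (Nat.cast_le.mpr (count_le p hb.2)) (h01 p).1
    _ = (Kmax t r w : ℝ) * ∑ p : Finset (Finset (Fin t) ⊕ Finset (Fin t)) ×
          Finset (Finset (Fin t) ⊕ Finset (Fin t)), φ p := by rw [Finset.mul_sum]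

/-- For positive integers `r, w, t` with `w ≤ r` and `t ≥ r + w`,
`bc*(I_t(r,w)) = min_{w ≤ m ≤ t−r} C(t,m) / C(t−r−w, m−w)`. -/
theorem fracBC_biIntGraph (r w t : ℕ) (hw : 0 < w) (hwr : w ≤ r) (ht : r + w ≤ t) :
    fracBC (biIntGraph t r w)
      = sInf {x : ℝ | ∃ m : ℕ, w ≤ m ∧ m ≤ t - r ∧
          x = (t.choose m : ℝ) / ((t - r - w).choose (m - w) : ℝ)} := by
  classical
  obtain ⟨m₀, hm₀1, hm₀2, hKeq, hK1⟩ := Kmax_spec hwr ht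
  have hKR : (0 : ℝ) < (Kmax t r w : ℝ) := by exact_mod_cast hK1
  set E := t.choose r * (t - r).choose w with hEdef
  have hval : ∀ m, w ≤ m → m ≤ t - r →
      (t.choose m : ℝ) / ((t - r - w).choose (m - w) : ℝ)
        = (E : ℝ) / ((m.choose w * (t - m).choose r : ℕ) : ℝ) := by
    intro m h1 h2
    have hc : 0 < (t - r - w).choose (m - w) := Nat.choose_pos (by omega)
    have hf : 0 < m.choose w * (t - m).choose r :=
      Nat.mul_pos (Nat.choose_pos h1) (Nat.choose_pos (by omega))
    rw [div_eq_div_iff (by exact_mod_cast hc.ne') (by exact_mod_cast hf.ne')]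
    exact_mod_cast key_id (t := t) hwr ht h1 h2
  have hEK_val : (t.choose m₀ : ℝ) / ((t - r - w).choose (m₀ - w) : ℝ)
      = (E : ℝ) / (Kmax t r w : ℝ) := by
    rw [hval m₀ hm₀1 hm₀2, hKeq]
  have hmemR : (E : ℝ) / (Kmax t r w : ℝ) ∈ {x : ℝ | ∃ m : ℕ, w ≤ m ∧ m ≤ t - r ∧
      x = (t.choose m : ℝ) / ((t - r - w).choose (m - w) : ℝ)} :=
    ⟨m₀, hm₀1, hm₀2, hEK_val.symm⟩
  have hlbR : ∀ x ∈ {x : ℝ | ∃ m : ℕ, w ≤ m ∧ m ≤ t - r ∧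
      x = (t.choose m : ℝ) / ((t - r - w).choose (m - w) : ℝ)},
      (E : ℝ) / (Kmax t r w : ℝ) ≤ x := by
    rintro x ⟨m, h1, h2, rfl⟩
    rw [hval m h1 h2]
    have hf : 0 < m.choose w * (t - m).choose r :=
      Nat.mul_pos (Nat.choose_pos h1) (Nat.choose_pos (by omega))
    have hfR : (0 : ℝ) < ((m.choose w * (t - m).choose r : ℕ) : ℝ) := by exact_mod_cast hf
    have hfK : ((m.choose w * (t - m).choose r : ℕ) : ℝ) ≤ (Kmax t r w : ℝ) := by
      exact_mod_cast Kmax_le m (by omega)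
    gcongr
  have hmemL : (E : ℝ) / (Kmax t r w : ℝ) ∈ {s : ℝ | ∃ φ : Finset (Finset (Fin t) ⊕
      Finset (Fin t)) × Finset (Finset (Fin t) ⊕ Finset (Fin t)) → ℝ,
      (∀ p, 0 ≤ φ p ∧ φ p ≤ 1) ∧
      (∀ p, ¬(Disjoint p.1 p.2 ∧ ∀ x ∈ p.1, ∀ y ∈ p.2, (biIntGraph t r w).Adj x y) → φ p = 0) ∧
      (∀ x y, (biIntGraph t r w).Adj x y → 1 ≤ ∑ p : Finset (Finset (Fin t) ⊕ Finset (Fin t)) ×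
          Finset (Finset (Fin t) ⊕ Finset (Fin t)),
        (if (x ∈ p.1 ∧ y ∈ p.2) ∨ (y ∈ p.1 ∧ x ∈ p.2) then φ p else 0)) ∧
      s = ∑ p : Finset (Finset (Fin t) ⊕ Finset (Fin t)) ×
          Finset (Finset (Fin t) ⊕ Finset (Fin t)), φ p} := by
    obtain ⟨φ, h1, h2, h3, h4⟩ := ub_mem hw hwr ht hm₀1 hm₀2
    exact ⟨φ, h1, h2, h3, hEK_val.symm.trans h4⟩
  have hlbL : ∀ s ∈ {s : ℝ | ∃ φ : Finset (Finset (Fin t) ⊕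
      Finset (Fin t)) × Finset (Finset (Fin t) ⊕ Finset (Fin t)) → ℝ,
      (∀ p, 0 ≤ φ p ∧ φ p ≤ 1) ∧
      (∀ p, ¬(Disjoint p.1 p.2 ∧ ∀ x ∈ p.1, ∀ y ∈ p.2, (biIntGraph t r w).Adj x y) → φ p = 0) ∧
      (∀ x y, (biIntGraph t r w).Adj x y → 1 ≤ ∑ p : Finset (Finset (Fin t) ⊕ Finset (Fin t)) ×
          Finset (Finset (Fin t) ⊕ Finset (Fin t)),
        (if (x ∈ p.1 ∧ y ∈ p.2) ∨ (y ∈ p.1 ∧ x ∈ p.2) then φ p else 0)) ∧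
      s = ∑ p : Finset (Finset (Fin t) ⊕ Finset (Fin t)) ×
          Finset (Finset (Fin t) ⊕ Finset (Fin t)), φ p},
      (E : ℝ) / (Kmax t r w : ℝ) ≤ s := by
    rintro s ⟨φ, h1, h2, h3, rfl⟩
    rw [div_le_iff₀ hKR]
    rw [mul_comm]
    exact lb ht φ h1 h2 h3
  have hL : fracBC (biIntGraph t r w) = (E : ℝ) / (Kmax t r w : ℝ) :=
    le_antisymm (csInf_le ⟨_, hlbL⟩ hmemL) (le_csInf ⟨_, hmemL⟩ hlbL)
  have hR : sInf {x : ℝ | ∃ m : ℕ, w ≤ m ∧ m ≤ t - r ∧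
      x = (t.choose m : ℝ) / ((t - r - w).choose (m - w) : ℝ)}
      = (E : ℝ) / (Kmax t r w : ℝ) :=
    le_antisymm (csInf_le ⟨_, hlbR⟩ hmemR) (le_csInf ⟨_, hmemR⟩ hlbR)
  rw [hL, hR]
end
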